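/- arXiv:1705.03099 — 9 statements merged into one kernel-verified Lean document; each statement's English description precedes it below -/
import Mathlib

section
/- For all real parameters a > 2 and b > 0, the function r ↦ (1 − exp(−b·r^{−a}))·r is Lebesgue integrable on (0, ∞) and ∫₀^∞ (1 − exp(−b·r^{−a}))·r dr = (1/2)·b^{2/a}·Γ(1 − 2/a), where Γ is the Gamma function. -/
open MeasureTheory Real Set Filter

private lemma one_sub_exp_le' (t : ℝ) : 1 - Real.exp (-t) ≤ t := by
  have := Real.add_one_le_exp (-t)
  linarith

private lemma exp_neg_le_inv' (t : ℝ) (ht : 0 < t) : Real.exp (-t) ≤ t⁻¹ := by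
  rw [Real.exp_neg]
  have h : t ≤ Real.exp t := by
    have := Real.add_one_le_exp t; linarith
  exact inv_anti₀ ht h

/-- For `a > 2`, `b > 0`, the function `r ↦ (1 − exp(−b·r^{−a}))·r` is integrable on `(0,∞)`
and its integral equals `(1/2)·b^{2/a}·Γ(1 − 2/a)`. -/
theorem integrable_and_integral_one_sub_exp (a b : ℝ) (ha : 2 < a) (hb : 0 < b) :
    IntegrableOn (fun r : ℝ => (1 - Real.exp (-b * r ^ (-a))) * r) (Set.Ioi 0) ∧
    ∫ r in Set.Ioi (0 : ℝ), (1 - Real.exp (-b * r ^ (-a))) * r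
      = (1 / 2) * b ^ (2 / a) * Real.Gamma (1 - 2 / a) := by
  have ha0 : (0 : ℝ) < a := by linarith
  set f : ℝ → ℝ := fun r => (1 - Real.exp (-b * r ^ (-a))) * r with hf
  -- basic facts about the integrand
  have hexp_le_one : ∀ r : ℝ, 0 < r → Real.exp (-b * r ^ (-a)) ≤ 1 := by
    intro r hr
    apply Real.exp_le_one_iff.mpr
    have : (0:ℝ) ≤ r ^ (-a) := Real.rpow_nonneg hr.le _
    nlinarith
  have hf_nonneg : ∀ r : ℝ, 0 < r → 0 ≤ f r := by
    intro r hr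
    have h := hexp_le_one r hr
    exact mul_nonneg (by linarith) hr.le
  have hf_le : ∀ r : ℝ, 0 < r → f r ≤ b * r ^ (1 - a) := by
    intro r hr
    have h1 : 1 - Real.exp (-b * r ^ (-a)) ≤ b * r ^ (-a) := by
      have := one_sub_exp_le' (b * r ^ (-a))
      rw [neg_mul] at *
      linarith
    calc f r ≤ (b * r ^ (-a)) * r := by
          have := hf_nonneg r hr
          exact mul_le_mul_of_nonneg_right h1 hr.le
      _ = b * r ^ (1 - a) := by
          rw [mul_assoc]
          congr 1
          rw [show (1 : ℝ) - a = -a + 1 by ring, Real.rpow_add hr, Real.rpow_one]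
  have hmeas : AEStronglyMeasurable f (volume.restrict (Ioi (0:ℝ))) := by
    apply Measurable.aestronglyMeasurable
    fun_prop
  -- integrability
  have hint : IntegrableOn f (Set.Ioi 0) := by
    rw [show Ioi (0:ℝ) = Ioc 0 1 ∪ Ioi 1 from (Ioc_union_Ioi_eq_Ioi zero_le_one).symm]
    apply IntegrableOn.union
    · apply Measure.integrableOn_of_bounded (M := 1) (by simp)
      · exact (by fun_prop : Measurable f).aestronglyMeasurable
      · filter_upwards [ae_restrict_mem measurableSet_Ioc] with r hr
        rw [Real.norm_eq_abs, abs_of_nonneg (hf_nonneg r hr.1)]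
        have h1 : 1 - Real.exp (-b * r ^ (-a)) ≤ 1 := by
          have := Real.exp_pos (-b * r ^ (-a)); linarith
        have h0 := hf_nonneg r hr.1
        calc f r ≤ 1 * r := mul_le_mul_of_nonneg_right h1 hr.1.le
          _ ≤ 1 := by rw [one_mul]; exact hr.2
    · apply Integrable.mono' ((integrableOn_Ioi_rpow_of_lt (by linarith : 1 - a < -1)
        zero_lt_one).const_mul b)
      · exact (by fun_prop : Measurable f).aestronglyMeasurable
      · filter_upwards [ae_restrict_mem measurableSet_Ioi] with r hr
        have hr0 : (0:ℝ) < r := lt_trans zero_lt_one hr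
        rw [Real.norm_eq_abs, abs_of_nonneg (hf_nonneg r hr0)]
        exact hf_le r hr0
  refine ⟨hint, ?_⟩
  -- integration by parts
  set u : ℝ → ℝ := fun r => 1 - Real.exp (-b * r ^ (-a)) with hu_def
  set v : ℝ → ℝ := fun r => r ^ 2 / 2 with hv_def
  set u' : ℝ → ℝ := fun r => -(Real.exp (-b * r ^ (-a)) * (-b * (-a * r ^ (-a - 1)))) with hu'_def
  set v' : ℝ → ℝ := fun r => r with hv'_def
  have hu : ∀ r ∈ Ioi (0:ℝ), HasDerivAt u (u' r) r := by
    intro r hr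
    have h1 : HasDerivAt (fun r : ℝ => r ^ (-a)) (-a * r ^ (-a - 1)) r :=
      Real.hasDerivAt_rpow_const (Or.inl (ne_of_gt hr))
    exact ((h1.const_mul (-b)).exp).const_sub 1
  have hv : ∀ r ∈ Ioi (0:ℝ), HasDerivAt v (v' r) r := by
    intro r _
    have := (hasDerivAt_pow 2 r).div_const 2
    exact this.congr_deriv (by simp [hv'_def])
  -- |u' * v| bounds
  have hu'v_eq : ∀ r : ℝ, 0 < r → u' r * v r = -(a * b / 2) * (r ^ (1 - a) * Real.exp (-b * r ^ (-a))) := by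
    intro r hr
    have h1 : r ^ (-a - 1) * r ^ (2:ℕ) = r ^ (1 - a) := by
      rw [← Real.rpow_natCast r 2, ← Real.rpow_add hr]
      congr 1
      push_cast
      ring
    calc u' r * v r
        = -(a * b / 2) * ((r ^ (-a - 1) * r ^ (2:ℕ)) * Real.exp (-b * r ^ (-a))) := by
          simp only [hu'_def, hv_def]
          ring
      _ = _ := by rw [h1]
  -- integrability of u' * v
  have hu'v_abs : ∀ r : ℝ, 0 < r →
      ‖u' r * v r‖ = a * b / 2 * (r ^ (1 - a) * Real.exp (-b * r ^ (-a))) := by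
    intro r hr
    rw [hu'v_eq r hr, Real.norm_eq_abs, abs_mul, abs_neg,
      abs_of_nonneg (by positivity : (0:ℝ) ≤ a * b / 2),
      abs_of_nonneg (mul_nonneg (Real.rpow_nonneg hr.le _) (Real.exp_nonneg _))]
  have hu'v_meas : Measurable (fun r : ℝ => u' r * v r) := by
    simp only [hu'_def, hv_def]
    fun_prop
  have hu'v_int : IntegrableOn (fun r : ℝ => u' r * v r) (Ioi (0:ℝ)) := by
    rw [show Ioi (0:ℝ) = Ioc 0 1 ∪ Ioi 1 from (Ioc_union_Ioi_eq_Ioi zero_le_one).symm]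
    apply IntegrableOn.union
    · apply Measure.integrableOn_of_bounded (M := a / 2) (by simp)
      · exact hu'v_meas.aestronglyMeasurable
      · filter_upwards [ae_restrict_mem measurableSet_Ioc] with r hr
        rw [hu'v_abs r hr.1]
        have hrpos := hr.1
        have hE : Real.exp (-b * r ^ (-a)) ≤ (b * r ^ (-a))⁻¹ := by
          rw [show -b * r ^ (-a) = -(b * r ^ (-a)) by ring]
          exact exp_neg_le_inv' _ (by positivity)
        have hcalc : r ^ (1 - a) * (b * r ^ (-a))⁻¹ = r / b := by
          rw [mul_inv, Real.rpow_neg hrpos.le, inv_inv, mul_comm (b⁻¹), ← mul_assoc,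
            ← Real.rpow_add hrpos, show 1 - a + a = (1:ℝ) by ring, Real.rpow_one,
            div_eq_mul_inv]
        have h1 : a * b / 2 * (r ^ (1 - a) * Real.exp (-b * r ^ (-a)))
            ≤ a * b / 2 * (r ^ (1 - a) * (b * r ^ (-a))⁻¹) := by
          apply mul_le_mul_of_nonneg_left _ (by positivity)
          exact mul_le_mul_of_nonneg_left hE (Real.rpow_nonneg hrpos.le _)
        rw [hcalc] at h1
        calc a * b / 2 * (r ^ (1 - a) * Real.exp (-b * r ^ (-a)))
            ≤ a * b / 2 * (r / b) := h1
          _ = a / 2 * r := by field_simp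
          _ ≤ a / 2 * 1 := mul_le_mul_of_nonneg_left hr.2 (by linarith)
          _ = a / 2 := mul_one _
    · apply Integrable.mono' ((integrableOn_Ioi_rpow_of_lt (by linarith : 1 - a < -1)
        zero_lt_one).const_mul (a * b / 2))
      · exact hu'v_meas.aestronglyMeasurable
      · filter_upwards [ae_restrict_mem measurableSet_Ioi] with r hr
        have hr0 : (0:ℝ) < r := lt_trans zero_lt_one hr
        rw [hu'v_abs r hr0]
        have hE1 : Real.exp (-b * r ^ (-a)) ≤ 1 := hexp_le_one r hr0
        have h2 : r ^ (1-a) * Real.exp (-b * r ^ (-a)) ≤ r ^ (1-a) * 1 :=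
          mul_le_mul_of_nonneg_left hE1 (Real.rpow_nonneg hr0.le _)
        calc a * b / 2 * (r ^ (1 - a) * Real.exp (-b * r ^ (-a)))
            ≤ a * b / 2 * (r ^ (1-a) * 1) := mul_le_mul_of_nonneg_left h2 (by positivity)
          _ = a * b / 2 * r ^ (1-a) := by ring
  -- boundary limits
  have h_zero : Tendsto (u * v) (nhdsWithin 0 (Ioi 0)) (nhds (0:ℝ)) := by
    apply squeeze_zero_norm' (a := fun r : ℝ => r ^ 2 / 2)
    · filter_upwards [self_mem_nhdsWithin] with r (hr : (0:ℝ) < r)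
      have h1 : u r ≤ 1 := by
        have := Real.exp_pos (-b * r ^ (-a)); simp only [hu_def]; linarith
      have h0 : 0 ≤ u r := by
        have := hexp_le_one r hr; simp only [hu_def]; linarith
      have hv0 : (0:ℝ) ≤ r ^ 2 / 2 := by positivity
      rw [Pi.mul_apply, Real.norm_eq_abs, abs_of_nonneg (mul_nonneg h0 hv0)]
      calc u r * v r ≤ 1 * v r := mul_le_mul_of_nonneg_right h1 hv0
        _ = r ^ 2 / 2 := one_mul _
    · have : Tendsto (fun r : ℝ => r ^ 2 / 2) (nhds 0) (nhds ((0:ℝ) ^ 2 / 2)) :=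
        ((continuous_pow 2).div_const 2).tendsto 0
      simpa using this.mono_left nhdsWithin_le_nhds
  have h_infty : Tendsto (u * v) atTop (nhds (0:ℝ)) := by
    apply squeeze_zero_norm' (a := fun r : ℝ => b / 2 * r ^ (2 - a))
    · filter_upwards [eventually_gt_atTop (0:ℝ)] with r hr
      have h0 : 0 ≤ u r := by
        have := hexp_le_one r hr; simp only [hu_def]; linarith
      have hv0 : (0:ℝ) ≤ r ^ 2 / 2 := by positivity
      rw [Pi.mul_apply, Real.norm_eq_abs, abs_of_nonneg (mul_nonneg h0 hv0)]
      have h1 : u r ≤ b * r ^ (-a) := by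
        have := one_sub_exp_le' (b * r ^ (-a))
        simp only [hu_def, neg_mul] at *
        linarith
      have key : r ^ (-a) * (r ^ 2 / 2) = r ^ (2 - a) / 2 := by
        rw [← Real.rpow_natCast r 2, div_eq_mul_inv, ← mul_assoc, ← Real.rpow_add hr,
          show -a + ((2:ℕ):ℝ) = 2 - a by push_cast; ring, ← div_eq_mul_inv]
      calc u r * v r ≤ (b * r ^ (-a)) * (r ^ 2 / 2) :=
            mul_le_mul_of_nonneg_right h1 hv0
        _ = b / 2 * r ^ (2 - a) := by rw [mul_assoc, key]; ring
    · have : Tendsto (fun r : ℝ => b / 2 * r ^ (-(a - 2))) atTop (nhds (b / 2 * 0)) :=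
        (tendsto_rpow_neg_atTop (by linarith : (0:ℝ) < a - 2)).const_mul (b / 2)
      simpa [show -(a-2) = 2 - a by ring] using this
  -- integration by parts
  have huv'_eq : u * v' = f := by
    funext r
    simp [hf, hu_def, hv'_def]
  have key := integral_Ioi_mul_deriv_eq_deriv_mul hu hv
    (by rw [huv'_eq]; exact hint)
    (by rw [Pi.mul_def]; exact hu'v_int) h_zero h_infty
  -- rewrite the right-hand integral
  have h2 : ∫ r in Ioi (0:ℝ), u' r * v r
      = -(a * b / 2) * ∫ r in Ioi (0:ℝ), r ^ (1 - a) * Real.exp (-b * r ^ (-a)) := by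
    rw [← integral_const_mul]
    exact setIntegral_congr_fun measurableSet_Ioi (fun r hr => hu'v_eq r hr)
  -- substitution x ↦ x⁻¹
  have hsub : ∫ x in Ioi (0:ℝ), x ^ (a - 3) * Real.exp (-b * x ^ a)
      = ∫ r in Ioi (0:ℝ), r ^ (1 - a) * Real.exp (-b * r ^ (-a)) := by
    rw [← integral_comp_rpow_Ioi (fun y : ℝ => y ^ (1 - a) * Real.exp (-b * y ^ (-a)))
      (p := (-1:ℝ)) (by norm_num)]
    refine setIntegral_congr_fun measurableSet_Ioi (fun x hx => ?_)
    have hx0 : (0:ℝ) < x := hx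
    have e1 : ((x:ℝ) ^ (-1:ℝ)) ^ (1 - a) = x ^ (a - 1) := by
      rw [← Real.rpow_mul hx0.le]
      congr 1
      ring
    have e2 : ((x:ℝ) ^ (-1:ℝ)) ^ (-a) = x ^ a := by
      rw [← Real.rpow_mul hx0.le]
      congr 1
      ring
    simp only [smul_eq_mul, e1, e2, abs_neg, abs_one, one_mul]
    rw [← mul_assoc, ← Real.rpow_add hx0]
    congr 1
    ring
  have hval : ∫ x in Ioi (0:ℝ), x ^ (a - 3) * Real.exp (-b * x ^ a)
      = b ^ (-(a - 3 + 1) / a) * (1 / a) * Real.Gamma ((a - 3 + 1) / a) :=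
    integral_rpow_mul_exp_neg_mul_rpow ha0 (by linarith) hb
  -- assemble
  have final : ∫ r in Ioi (0:ℝ), u r * v' r
      = 1 / 2 * b ^ (2 / a) * Real.Gamma (1 - 2 / a) := by
    rw [key, h2, ← hsub, hval]
    have hA : (a - 3 + 1) / a = 1 - 2 / a := by field_simp; ring
    have hB : -(a - 3 + 1) / a = 2 / a - 1 := by field_simp; ring
    rw [hB, hA]
    rw [Real.rpow_sub hb, Real.rpow_one]
    field_simp
    ring
  have hfun : f = fun r => u r * v' r := by
    funext r
    simp [hf, hu_def, hv'_def]
  rw [hfun]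
  exact final
end

section
/- For every s > 0, the function r ↦ (1 − exp(−s·g(r)))·r is Lebesgue integrable on (0, ∞), and the value Z(s) of this integral satisfies 0 < Z(s) < ∞. -/
open MeasureTheory Real

/-- With `g(r) = r^{−γ−2}·(γ² + 4·W_e·r²/c²)`, for every `s > 0` the function
`r ↦ (1 − exp(−s·g(r)))·r` is Lebesgue integrable on `(0,∞)` and the value
`Z(s)` of this integral satisfies `0 < Z(s)` (finiteness being integrability). -/
theorem Z_welldefined_pos (γ We c : ℝ) (hγ : 2 < γ) (hWe : 0 < We) (hc : 0 < c)
    (g : ℝ → ℝ) (hg : ∀ r > 0, g r = r ^ (-γ - 2) * (γ ^ 2 + 4 * We * r ^ 2 / c ^ 2))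
    (s : ℝ) (hs : 0 < s) :
    IntegrableOn (fun r : ℝ => (1 - Real.exp (-s * g r)) * r) (Set.Ioi 0) ∧
    0 < ∫ r in Set.Ioi (0 : ℝ), (1 - Real.exp (-s * g r)) * r := by
  set f0 : ℝ → ℝ := fun r =>
    (1 - Real.exp (-s * (r ^ (-γ - 2) * (γ ^ 2 + 4 * We * r ^ 2 / c ^ 2)))) * r with hf0def
  have heq : Set.EqOn (fun r : ℝ => (1 - Real.exp (-s * g r)) * r) f0 (Set.Ioi 0) := by
    intro r hr
    simp only [f0, hg r hr]
  -- positivity of g0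
  have hgpos : ∀ r : ℝ, 0 < r → 0 < r ^ (-γ - 2) * (γ ^ 2 + 4 * We * r ^ 2 / c ^ 2) := by
    intro r hr
    have h1 : (0:ℝ) < r ^ (-γ - 2) := Real.rpow_pos_of_pos hr _
    have h2 : (0:ℝ) < γ ^ 2 + 4 * We * r ^ 2 / c ^ 2 := by positivity
    exact mul_pos h1 h2
  have hf0pos : ∀ r : ℝ, 0 < r → 0 < f0 r := by
    intro r hr
    have hx : 0 < s * (r ^ (-γ - 2) * (γ ^ 2 + 4 * We * r ^ 2 / c ^ 2)) :=
      mul_pos hs (hgpos r hr)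
    have : Real.exp (-s * (r ^ (-γ - 2) * (γ ^ 2 + 4 * We * r ^ 2 / c ^ 2))) < 1 := by
      rw [Real.exp_lt_one_iff]; linarith
    exact mul_pos (by linarith) hr
  have hcont : ContinuousOn f0 (Set.Ioi 0) := by
    apply ContinuousOn.mul _ continuousOn_id
    apply ContinuousOn.sub continuousOn_const
    apply Real.continuous_exp.comp_continuousOn
    apply ContinuousOn.mul continuousOn_const
    apply ContinuousOn.mul
    · exact continuousOn_id.rpow_const fun x hx => Or.inl (ne_of_gt hx)
    · exact (by fun_prop : Continuous fun r : ℝ => γ ^ 2 + 4 * We * r ^ 2 / c ^ 2).continuousOn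
  -- upper bound for 1 - exp
  have hub : ∀ r : ℝ, 0 < r →
      1 - Real.exp (-s * (r ^ (-γ - 2) * (γ ^ 2 + 4 * We * r ^ 2 / c ^ 2)))
        ≤ s * (r ^ (-γ - 2) * (γ ^ 2 + 4 * We * r ^ 2 / c ^ 2)) := by
    intro r hr
    have := Real.add_one_le_exp (-s * (r ^ (-γ - 2) * (γ ^ 2 + 4 * We * r ^ 2 / c ^ 2)))
    linarith
  have hle1 : ∀ r : ℝ, 1 - Real.exp (-s * (r ^ (-γ - 2) * (γ ^ 2 + 4 * We * r ^ 2 / c ^ 2))) ≤ 1 := by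
    intro r
    have := Real.exp_pos (-s * (r ^ (-γ - 2) * (γ ^ 2 + 4 * We * r ^ 2 / c ^ 2)))
    linarith
  -- integrability on Ioc 0 1
  have hI1 : IntegrableOn f0 (Set.Ioc 0 1) := by
    apply Integrable.mono' (g := fun _ : ℝ => (1:ℝ))
      ((integrableOn_const_iff (C := (1:ℝ))).mpr (Or.inr measure_Ioc_lt_top))
    · exact (hcont.mono Set.Ioc_subset_Ioi_self).aestronglyMeasurable measurableSet_Ioc
    · rw [ae_restrict_iff' measurableSet_Ioc]
      filter_upwards with r hr
      have hr0 : 0 < r := hr.1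
      have hpos := hf0pos r hr0
      rw [Real.norm_of_nonneg (le_of_lt hpos)]
      simp only [f0]
      have h1 := hle1 r
      have h2 : 0 < 1 - Real.exp (-s * (r ^ (-γ - 2) * (γ ^ 2 + 4 * We * r ^ 2 / c ^ 2))) := by
        have : Real.exp (-s * (r ^ (-γ - 2) * (γ ^ 2 + 4 * We * r ^ 2 / c ^ 2))) < 1 := by
          rw [Real.exp_lt_one_iff]
          nlinarith [hgpos r hr0, hs]
        linarith
      nlinarith [hr.2]
  -- integrability on Ioi 1
  have key : ∀ r : ℝ, 0 < r →
      s * (r ^ (-γ - 2) * (γ ^ 2 + 4 * We * r ^ 2 / c ^ 2)) * r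
        = s * γ ^ 2 * r ^ (-γ - 1) + s * (4 * We / c ^ 2) * r ^ (1 - γ) := by
    intro r hr
    have e1 : r ^ (-γ - 1) = r ^ (-γ - 2) * r := by
      rw [show -γ - 1 = (-γ - 2) + 1 by ring, Real.rpow_add hr, Real.rpow_one]
    have e2 : r ^ (1 - γ) = r ^ (-γ - 2) * r ^ (3:ℕ) := by
      rw [show (1 - γ) = (-γ - 2) + ((3:ℕ):ℝ) by push_cast; ring, Real.rpow_add hr,
        Real.rpow_natCast]
    rw [e1, e2]
    field_simp
  have hI2 : IntegrableOn f0 (Set.Ioi 1) := by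
    have hmaj : IntegrableOn
        (fun r : ℝ => s * γ ^ 2 * r ^ (-γ - 1) + s * (4 * We / c ^ 2) * r ^ (1 - γ))
        (Set.Ioi 1) := by
      apply Integrable.add
      · exact (integrableOn_Ioi_rpow_of_lt (by linarith) one_pos).const_mul _
      · exact (integrableOn_Ioi_rpow_of_lt (by linarith) one_pos).const_mul _
    apply Integrable.mono' hmaj
    · exact (hcont.mono (t := Set.Ioi 1) fun x hx => lt_trans one_pos hx).aestronglyMeasurable measurableSet_Ioi
    · rw [ae_restrict_iff' measurableSet_Ioi]
      filter_upwards with r hr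
      have hr0 : (0:ℝ) < r := lt_trans one_pos hr
      rw [Real.norm_of_nonneg (le_of_lt (hf0pos r hr0))]
      rw [← key r hr0]
      simp only [f0]
      exact mul_le_mul_of_nonneg_right (hub r hr0) (le_of_lt hr0)
  have hIf0 : IntegrableOn f0 (Set.Ioi 0) := by
    rw [← Set.Ioc_union_Ioi_eq_Ioi (le_of_lt one_pos)]
    exact hI1.union hI2
  have hIf : IntegrableOn (fun r : ℝ => (1 - Real.exp (-s * g r)) * r) (Set.Ioi 0) :=
    hIf0.congr_fun heq.symm measurableSet_Ioi
  refine ⟨hIf, ?_⟩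
  rw [setIntegral_congr_fun measurableSet_Ioi heq]
  have hnn : ∀ᵐ r ∂(volume.restrict (Set.Ioi (0:ℝ))), 0 ≤ f0 r := by
    rw [ae_restrict_iff' measurableSet_Ioi]
    filter_upwards with r hr
    exact le_of_lt (hf0pos r hr)
  rw [setIntegral_pos_iff_support_of_nonneg_ae hnn hIf0]
  have hsub : Set.Ioi (0:ℝ) ⊆ Function.support f0 ∩ Set.Ioi 0 := by
    intro r hr
    exact ⟨ne_of_gt (hf0pos r hr), hr⟩
  calc (0:ENNReal) < volume (Set.Ioi (0:ℝ)) := by simp [Real.volume_Ioi]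
    _ ≤ volume (Function.support f0 ∩ Set.Ioi 0) := measure_mono hsub
end

section
/- For every s > 0 one has the strict sandwich U(s) < Z(s) < U(s) + c²·γ/(4·W_e). -/
open MeasureTheory Real

/-- With `g(r) = r^{−γ−2}·(γ² + 4·W_e·r²/c²)`,
`Z(s) = ∫₀^∞ (1 − exp(−s·g(r)))·r dr` and
`U(s) = ∫₀^∞ (1 − exp(−4·s·W_e·r^{−γ}/c²))·r dr`, for every `s > 0` the strict sandwich
`U(s) < Z(s) < U(s) + c²·γ/(4·W_e)` holds. -/
theorem Z_sandwich_wideband (γ We c : ℝ) (hγ : 2 < γ) (hWe : 0 < We) (hc : 0 < c)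
    (g Z U : ℝ → ℝ)
    (hg : ∀ r > 0, g r = r ^ (-γ - 2) * (γ ^ 2 + 4 * We * r ^ 2 / c ^ 2))
    (hZ : ∀ s > 0, Z s = ∫ r in Set.Ioi (0 : ℝ), (1 - Real.exp (-s * g r)) * r)
    (hU : ∀ s > 0, U s = ∫ r in Set.Ioi (0 : ℝ),
      (1 - Real.exp (-(4 * s * We * r ^ (-γ) / c ^ 2))) * r)
    (s : ℝ) (hs : 0 < s) :
    U s < Z s ∧ Z s < U s + c ^ 2 * γ / (4 * We) := by
  have hc2 : (0:ℝ) < c ^ 2 := by positivity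
  have hγ0 : (0:ℝ) < γ := by linarith
  set κ : ℝ := 4 * s * We / c ^ 2 with hκdef
  have hκ : 0 < κ := by positivity
  set b₀ : ℝ := s * γ ^ 2 with hb₀def
  have hb₀ : 0 < b₀ := by positivity
  set fU : ℝ → ℝ := fun r => (1 - Real.exp (-(κ * r ^ (-γ)))) * r with hfU
  set fh : ℝ → ℝ :=
    fun r => Real.exp (-(κ * r ^ (-γ))) * (1 - Real.exp (-(b₀ * r ^ (-γ - 2)))) * r with hfh
  set f3 : ℝ → ℝ := fun r => Real.exp (-(κ * r ^ (-γ))) * (b₀ * r ^ (-γ - 1)) with hf3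
  -- pointwise facts
  have hpt : ∀ r ∈ Set.Ioi (0:ℝ), 0 < fh r ∧ fh r < f3 r := by
    intro r hr
    have hr0 : (0:ℝ) < r := hr
    have hb : 0 < b₀ * r ^ (-γ - 2) := mul_pos hb₀ (rpow_pos_of_pos hr0 _)
    have e2 : 1 - Real.exp (-(b₀ * r ^ (-γ - 2))) < b₀ * r ^ (-γ - 2) := by
      have := Real.add_one_lt_exp (show -(b₀ * r ^ (-γ - 2)) ≠ 0 by linarith)
      linarith
    have e1 : 0 < 1 - Real.exp (-(b₀ * r ^ (-γ - 2))) := by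
      have := Real.exp_lt_one_iff.mpr (show -(b₀ * r ^ (-γ - 2)) < 0 by linarith)
      linarith
    refine ⟨mul_pos (mul_pos (Real.exp_pos _) e1) hr0, ?_⟩
    have hrpow : r ^ (-γ - 1) = r ^ (-γ - 2) * r := by
      rw [show -γ - 1 = (-γ - 2) + 1 by ring, Real.rpow_add hr0, Real.rpow_one]
    calc fh r = Real.exp (-(κ * r ^ (-γ))) * ((1 - Real.exp (-(b₀ * r ^ (-γ - 2)))) * r) := by
            ring
      _ < Real.exp (-(κ * r ^ (-γ))) * (b₀ * r ^ (-γ - 2) * r) := by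
            exact mul_lt_mul_of_pos_left (mul_lt_mul_of_pos_right e2 hr0) (Real.exp_pos _)
      _ = f3 r := by simp only [hf3, hrpow]; ring
  -- measurability
  have measU : AEStronglyMeasurable fU (volume.restrict (Set.Ioi 0)) := by
    apply Measurable.aestronglyMeasurable
    fun_prop
  have meash : AEStronglyMeasurable fh (volume.restrict (Set.Ioi 0)) := by
    apply Measurable.aestronglyMeasurable
    fun_prop
  have hIoc_Ioi : Set.Ioc (0:ℝ) 1 ∪ Set.Ioi 1 = Set.Ioi 0 := Set.Ioc_union_Ioi_eq_Ioi zero_le_one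
  -- integrability of fU
  have intU : IntegrableOn fU (Set.Ioi 0) := by
    rw [← hIoc_Ioi]
    apply IntegrableOn.union
    · refine Integrable.mono' (g := fun _ : ℝ => (1:ℝ))
        ((integrableOn_const_iff (C := (1:ℝ))).mpr (Or.inr measure_Ioc_lt_top))
        (measU.mono_measure (Measure.restrict_mono Set.Ioc_subset_Ioi_self le_rfl)) ?_
      filter_upwards [ae_restrict_mem measurableSet_Ioc] with r hr
      have hr0 : (0:ℝ) < r := hr.1
      have ha : 0 < κ * r ^ (-γ) := mul_pos hκ (rpow_pos_of_pos hr0 _)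
      have e1 : 0 < Real.exp (-(κ * r ^ (-γ))) := Real.exp_pos _
      have e2 : Real.exp (-(κ * r ^ (-γ))) ≤ 1 := Real.exp_le_one_iff.mpr (by linarith)
      rw [Real.norm_eq_abs, abs_mul, abs_of_nonneg (by linarith), abs_of_nonneg hr0.le]
      nlinarith [hr.2]
    · refine Integrable.mono'
        ((integrableOn_Ioi_rpow_of_lt (show -γ + 1 < -1 by linarith) one_pos).const_mul κ)
        (measU.mono_measure (Measure.restrict_mono (Set.Ioi_subset_Ioi zero_le_one) le_rfl)) ?_
      filter_upwards [ae_restrict_mem measurableSet_Ioi] with r hr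
      have hr0 : (0:ℝ) < r := lt_trans one_pos hr
      have ha : 0 < κ * r ^ (-γ) := mul_pos hκ (rpow_pos_of_pos hr0 _)
      have e2 : 1 - Real.exp (-(κ * r ^ (-γ))) ≤ κ * r ^ (-γ) := by
        have := Real.add_one_le_exp (-(κ * r ^ (-γ))); linarith
      have e1 : 0 ≤ 1 - Real.exp (-(κ * r ^ (-γ))) := by
        have := Real.exp_le_one_iff.mpr (show -(κ * r ^ (-γ)) ≤ 0 by linarith); linarith
      have hrpow : r ^ (-γ + 1) = r ^ (-γ) * r := by
        rw [Real.rpow_add hr0, Real.rpow_one]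
      rw [Real.norm_eq_abs, abs_mul, abs_of_nonneg e1, abs_of_nonneg hr0.le, hrpow, ← mul_assoc]
      exact mul_le_mul_of_nonneg_right e2 hr0.le
  -- integrability and value of f3 via substitution u = r^(-γ)
  set F : ℝ → ℝ := fun u => Real.exp (-(κ * u)) with hF
  have intF : IntegrableOn F (Set.Ioi 0) := by
    have := exp_neg_integrableOn_Ioi 0 hκ
    simpa [hF, neg_mul] using this
  have hFval : ∫ u in Set.Ioi (0:ℝ), F u = κ⁻¹ := by
    have h1 := integral_exp_neg_mul_rpow one_pos hκ
    simp only [Real.rpow_one] at h1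
    rw [show ((1:ℝ)/1 + 1) = 2 by norm_num, Real.Gamma_two, mul_one,
      show (-1/(1:ℝ)) = -1 by norm_num, Real.rpow_neg_one] at h1
    rw [← h1]
    congr 1 with u
    rw [hF, neg_mul]
  have hγne : (-γ) ≠ 0 := by linarith
  have hf3eq : f3 = fun x => (s * γ) * ((|(-γ)| * x ^ ((-γ) - 1)) • F (x ^ (-γ))) := by
    funext x
    simp only [hf3, hF, smul_eq_mul, abs_neg, abs_of_pos hγ0, hb₀def]
    ring_nf
  have int3 : IntegrableOn f3 (Set.Ioi 0) := by
    rw [hf3eq]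
    exact ((integrableOn_Ioi_comp_rpow_iff F hγne).mpr intF).const_mul _
  have hint3 : ∫ r in Set.Ioi (0:ℝ), f3 r = c ^ 2 * γ / (4 * We) := by
    rw [hf3eq, integral_const_mul, integral_comp_rpow_Ioi F hγne, hFval, hκdef]
    field_simp
  -- integrability of fh
  have inth : IntegrableOn fh (Set.Ioi 0) := by
    refine Integrable.mono' int3 meash ?_
    filter_upwards [ae_restrict_mem measurableSet_Ioi] with r hr
    rw [Real.norm_eq_abs, abs_of_pos (hpt r hr).1]
    exact (hpt r hr).2.le
  -- positivity of ∫ fh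
  have hpos : 0 < ∫ r in Set.Ioi (0:ℝ), fh r := by
    rw [setIntegral_pos_iff_support_of_nonneg_ae ?_ inth]
    · refine lt_of_lt_of_le ?_ (measure_mono
        (show Set.Ioi (0:ℝ) ⊆ Function.support fh ∩ Set.Ioi 0 from
          fun r hr => ⟨ne_of_gt (hpt r hr).1, hr⟩))
      rw [Real.volume_Ioi]
      exact ENNReal.zero_lt_top
    · filter_upwards [ae_restrict_mem measurableSet_Ioi] with r hr
      exact (hpt r hr).1.le
  -- strict upper bound ∫ fh < ∫ f3
  have hupper : ∫ r in Set.Ioi (0:ℝ), fh r < ∫ r in Set.Ioi (0:ℝ), f3 r := by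
    have hsub : 0 < ∫ r in Set.Ioi (0:ℝ), (f3 - fh) r := by
      rw [setIntegral_pos_iff_support_of_nonneg_ae ?_ (int3.sub inth)]
      · refine lt_of_lt_of_le ?_ (measure_mono
          (show Set.Ioi (0:ℝ) ⊆ Function.support (fun r => f3 r - fh r) ∩ Set.Ioi 0 from
            fun r hr => ⟨by simpa [Pi.sub_apply] using ne_of_gt (sub_pos.mpr (hpt r hr).2), hr⟩))
        rw [Real.volume_Ioi]
        exact ENNReal.zero_lt_top
      · filter_upwards [ae_restrict_mem measurableSet_Ioi] with r hr
        simpa [Pi.sub_apply] using sub_nonneg.mpr (hpt r hr).2.le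
    have heq := integral_sub int3 inth
    simp only [Pi.sub_apply] at hsub
    linarith [heq ▸ hsub]
  -- decomposition Z s = U s + ∫ fh
  have hZU : Z s = U s + ∫ r in Set.Ioi (0:ℝ), fh r := by
    rw [hZ s hs, hU s hs]
    have hUeq : (fun r : ℝ => (1 - Real.exp (-(4 * s * We * r ^ (-γ) / c ^ 2))) * r) = fU := by
      funext r
      have hκr : κ * r ^ (-γ) = 4 * s * We * r ^ (-γ) / c ^ 2 := by rw [hκdef]; ring
      simp only [hfU]
      rw [hκr]
    have hcong : ∀ r ∈ Set.Ioi (0:ℝ), (1 - Real.exp (-s * g r)) * r = fU r + fh r := by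
      intro r hr
      have hr0 : (0:ℝ) < r := hr
      have hr2 : r ^ (-γ - 2) * r ^ (2:ℕ) = r ^ (-γ) := by
        rw [← Real.rpow_natCast r 2, ← Real.rpow_add hr0]
        norm_num
      have hsg : s * g r = κ * r ^ (-γ) + b₀ * r ^ (-γ - 2) := by
        rw [hg r hr0]
        rw [show s * (r ^ (-γ - 2) * (γ ^ 2 + 4 * We * r ^ 2 / c ^ 2))
            = b₀ * r ^ (-γ - 2) + κ * (r ^ (-γ - 2) * r ^ (2:ℕ)) by
          rw [hb₀def, hκdef]; field_simp]
        rw [hr2]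
        ring
      rw [neg_mul, hsg, neg_add, Real.exp_add]
      simp only [hfU, hfh]
      ring
    rw [setIntegral_congr_fun measurableSet_Ioi hcong, hUeq,
      integral_add intU inth]
  constructor
  · rw [hZU]; linarith
  · rw [hZU, ← hint3]; linarith
end

section
/- With γ, c, λ, ρ held fixed, regarding CRB_LB and CRB_LB,W as functions of the effective bandwidth W_e, the ratio CRB_LB(W_e)/CRB_LB,W(W_e) tends to 1 as W_e → ∞; moreover for every W_e > 0 the deficiency satisfies 1 − CRB_LB(W_e)/CRB_LB,W(W_e) < πλ·c²·γ/(2·W_e), so the convergence rate is O(1/W_e). -/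
open MeasureTheory Real Filter

section CRBHelpers
open Set


lemma one_sub_exp_le'_s6 (x : ℝ) : 1 - exp (-x) ≤ x := by
  have := add_one_le_exp (-x); linarith

lemma contOn_model {b t : ℝ} :
    ContinuousOn (fun x : ℝ => (1 - exp (-(b * x))) * x ^ (-t - 1)) (Ioi (0:ℝ)) := by
  apply ContinuousOn.mul
  · exact (continuous_const.sub ((continuous_const.mul continuous_id).neg.rexp)).continuousOn
  · exact fun x hx => (Real.continuousAt_rpow_const x _ (Or.inl (ne_of_gt hx))).continuousWithinAt

lemma integrableOn_one_sub_exp_rpow {b t : ℝ} (hb : 0 < b) (ht0 : 0 < t) (ht1 : t < 1) :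
    IntegrableOn (fun x => (1 - exp (-(b * x))) * x ^ (-t - 1)) (Ioi (0:ℝ)) := by
  have key : ∀ x ∈ Ioi (0:ℝ), ‖(1 - exp (-(b * x))) * x ^ (-t - 1)‖
      ≤ (b * x) * x ^ (-t - 1) := by
    intro x hx
    have hx0 : (0:ℝ) < x := hx
    have h1 : 0 ≤ 1 - exp (-(b * x)) := by
      have : exp (-(b * x)) ≤ 1 := exp_le_one_iff.mpr (by nlinarith)
      linarith
    have h2 : 1 - exp (-(b * x)) ≤ b * x := one_sub_exp_le'_s6 _
    rw [norm_mul, norm_of_nonneg h1, norm_of_nonneg (rpow_nonneg hx0.le _)]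
    exact mul_le_mul_of_nonneg_right h2 (rpow_nonneg hx0.le _)
  rw [← Ioc_union_Ioi_eq_Ioi (zero_le_one' ℝ)]
  apply IntegrableOn.union
  · -- on Ioc 0 1 : dominate by b * x ^ (-t)
    have hdom : IntegrableOn (fun x => b * x ^ (-t)) (Ioc (0:ℝ) 1) := by
      have := intervalIntegral.intervalIntegrable_rpow' (a := 0) (b := 1) (show (-1:ℝ) < -t by linarith)
      rw [intervalIntegrable_iff_integrableOn_Ioc_of_le zero_le_one] at this
      exact this.const_mul b
    refine Integrable.mono' hdom
      ((contOn_model.mono Ioc_subset_Ioi_self).aestronglyMeasurable measurableSet_Ioc) ?_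
    refine (ae_restrict_iff' measurableSet_Ioc).mpr (Eventually.of_forall fun x hx => ?_)
    calc ‖(1 - exp (-(b * x))) * x ^ (-t - 1)‖ ≤ (b * x) * x ^ (-t - 1) :=
          key x (Ioc_subset_Ioi_self hx)
      _ = b * x ^ (-t) := by
          rw [show (-t:ℝ) = 1 + (-t-1) by ring, rpow_add hx.1, rpow_one]; ring
  · -- on Ioi 1 : dominate by x ^ (-t-1)
    have hdom : IntegrableOn (fun x => x ^ (-t - 1)) (Ioi (1:ℝ)) :=
      integrableOn_Ioi_rpow_of_lt (by linarith) one_pos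
    refine Integrable.mono' hdom
      ((contOn_model.mono (Ioi_subset_Ioi zero_le_one)).aestronglyMeasurable measurableSet_Ioi) ?_
    refine (ae_restrict_iff' measurableSet_Ioi).mpr (Eventually.of_forall fun x hx => ?_)
    have hx0 : (0:ℝ) < x := lt_trans one_pos hx
    have h1 : 0 ≤ 1 - exp (-(b * x)) := by
      have : exp (-(b * x)) ≤ 1 := exp_le_one_iff.mpr (by nlinarith)
      linarith
    have h2 : 1 - exp (-(b * x)) ≤ 1 := by have := exp_pos (-(b * x)); linarith
    rw [norm_mul, norm_of_nonneg h1, norm_of_nonneg (rpow_nonneg hx0.le _)]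
    exact mul_le_of_le_one_left (rpow_nonneg hx0.le _) h2

lemma integrableOn_rpow_mul_exp_neg_mul {a K : ℝ} (ha : 0 < a) (hK : 0 < K) :
    IntegrableOn (fun x => x ^ (a - 1) * exp (-(K * x))) (Ioi (0:ℝ)) := by
  have h0 := Real.GammaIntegral_convergent ha
  have h1 : IntegrableOn (fun x => exp (-(K * x)) * (K * x) ^ (a - 1)) (Ioi (0:ℝ)) := by
    have := (integrableOn_Ioi_comp_mul_left_iff
      (fun x => exp (-x) * x ^ (a - 1)) 0 hK).mpr (by simpa using h0)
    simpa using this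
  have h2 : IntegrableOn (fun x => K ^ (a-1) * (x ^ (a - 1) * exp (-(K * x)))) (Ioi (0:ℝ)) := by
    refine h1.congr_fun (fun x hx => ?_) measurableSet_Ioi
    dsimp only
    rw [mul_rpow hK.le (le_of_lt hx)]
    ring
  have h3 : IntegrableOn
      (fun x => (K ^ (a-1))⁻¹ * (K ^ (a-1) * (x ^ (a - 1) * exp (-(K * x))))) (Ioi (0:ℝ)) :=
    h2.const_mul _
  refine h3.congr_fun (fun x hx => ?_) measurableSet_Ioi
  have : (K:ℝ) ^ (a-1) ≠ 0 := (rpow_pos_of_pos hK _).ne'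
  field_simp

lemma integral_one_sub_exp_rpow {b t : ℝ} (hb : 0 < b) (ht0 : 0 < t) (ht1 : t < 1) :
    ∫ x in Ioi (0:ℝ), (1 - exp (-(b * x))) * x ^ (-t - 1) = b ^ t * Gamma (1 - t) / t := by
  have ht : (t:ℝ) ≠ 0 := ht0.ne'
  have hu : ∀ x ∈ Ioi (0:ℝ),
      HasDerivAt (fun y => 1 - exp (-(b * y))) (b * exp (-(b * x))) x := by
    intro x _
    have h : HasDerivAt (fun y : ℝ => -(b * y)) (-(b * 1)) x :=
      ((hasDerivAt_id x).const_mul b).neg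
    have h2 := (h.exp).const_sub 1
    refine h2.congr_deriv ?_
    ring
  have hv : ∀ x ∈ Ioi (0:ℝ),
      HasDerivAt (fun y : ℝ => -(y ^ (-t)) / t) (x ^ (-t - 1)) x := by
    intro x hx
    have h := (Real.hasDerivAt_rpow_const (p := -t) (Or.inl (ne_of_gt hx))).neg.div_const t
    refine h.congr_deriv ?_
    rw [neg_mul, neg_neg, mul_div_cancel_left₀ _ ht]
  have huv' : IntegrableOn
      ((fun y => 1 - exp (-(b * y))) * (fun x : ℝ => x ^ (-t - 1))) (Ioi (0:ℝ)) :=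
    integrableOn_one_sub_exp_rpow hb ht0 ht1
  have hu'v : IntegrableOn
      ((fun x => b * exp (-(b * x))) * (fun y : ℝ => -(y ^ (-t)) / t)) (Ioi (0:ℝ)) := by
    have h0 : IntegrableOn (fun x => x ^ ((1-t) - 1) * exp (-(b * x))) (Ioi (0:ℝ)) :=
      integrableOn_rpow_mul_exp_neg_mul (by linarith) hb
    have h1 : IntegrableOn (fun x => -(b/t) * (x ^ ((1-t) - 1) * exp (-(b * x)))) (Ioi (0:ℝ)) :=
      h0.const_mul _
    refine h1.congr_fun (fun x hx => ?_) measurableSet_Ioi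
    have he : (1-t) - 1 = -t := by ring
    rw [he]
    simp only [Pi.mul_apply]
    ring
  have h_zero : Tendsto
      ((fun y => 1 - exp (-(b * y))) * (fun y : ℝ => -(y ^ (-t)) / t))
      (nhdsWithin 0 (Ioi 0)) (nhds 0) := by
    have hgt : Tendsto (fun x : ℝ => (b/t) * x ^ (1 - t)) (nhdsWithin 0 (Ioi 0)) (nhds 0) := by
      have hcont : Tendsto (fun x : ℝ => x ^ (1 - t)) (nhdsWithin 0 (Ioi 0)) (nhds 0) := by
        have h := (Real.continuousAt_rpow_const 0 (1 - t) (Or.inr (by linarith))).tendsto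
        rw [Real.zero_rpow (by linarith : (1:ℝ) - t ≠ 0)] at h
        exact h.mono_left nhdsWithin_le_nhds
      have := hcont.const_mul (b/t)
      simpa using this
    refine squeeze_zero_norm' ?_ hgt
    · filter_upwards [self_mem_nhdsWithin] with x hx
      have hx0 : (0:ℝ) < x := hx
      have h1 : 0 ≤ 1 - exp (-(b * x)) := by
        have : exp (-(b * x)) ≤ 1 := exp_le_one_iff.mpr (by nlinarith)
        linarith
      have h2 : 1 - exp (-(b * x)) ≤ b * x := one_sub_exp_le'_s6 _
      have hxt : (0:ℝ) ≤ x ^ (-t) := rpow_nonneg hx0.le _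
      simp only [Pi.mul_apply, norm_mul, norm_div, norm_neg]
      rw [norm_of_nonneg h1, norm_of_nonneg hxt, norm_of_nonneg ht0.le]
      calc (1 - exp (-(b * x))) * (x ^ (-t) / t) ≤ (b * x) * (x ^ (-t) / t) := by
            apply mul_le_mul_of_nonneg_right h2 (by positivity)
        _ = (b/t) * x ^ (1 - t) := by
            rw [show (1 - t : ℝ) = 1 + (-t) by ring, rpow_add hx0, rpow_one]
            ring
  have h_infty : Tendsto
      ((fun y => 1 - exp (-(b * y))) * (fun y : ℝ => -(y ^ (-t)) / t))
      atTop (nhds 0) := by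
    have h1 : Tendsto (fun y : ℝ => 1 - exp (-(b * y))) atTop (nhds 1) := by
      have hbot : Tendsto (fun y : ℝ => -(b * y)) atTop atBot :=
        tendsto_neg_atTop_atBot.comp (tendsto_id.const_mul_atTop hb)
      have := Real.tendsto_exp_atBot.comp hbot
      simpa using tendsto_const_nhds.sub this
    have h2 : Tendsto (fun y : ℝ => -(y ^ (-t)) / t) atTop (nhds 0) := by
      have := ((tendsto_rpow_neg_atTop ht0).neg).div_const t
      simpa using this
    have := h1.mul h2
    rw [mul_zero] at this; exact this
  have key := integral_Ioi_mul_deriv_eq_deriv_mul hu hv huv' hu'v h_zero h_infty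
  have hval : ∫ x in Ioi (0:ℝ), (b * exp (-(b * x))) * (-(x ^ (-t)) / t)
      = -(b/t) * ((1/b) ^ (1 - t) * Gamma (1 - t)) := by
    rw [show (fun x : ℝ => (b * exp (-(b * x))) * (-(x ^ (-t)) / t))
        = (fun x : ℝ => -(b/t) * (x ^ ((1-t) - 1) * exp (-(b * x)))) from ?_]
    · rw [MeasureTheory.integral_const_mul, integral_rpow_mul_exp_neg_mul_Ioi (by linarith) hb]
    · funext x
      rw [show ((1:ℝ)-t) - 1 = -t by ring]
      ring
  have hfin : ∫ x in Ioi (0:ℝ), (1 - exp (-(b * x))) * x ^ (-t - 1)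
      = (0:ℝ) - 0 - ∫ x in Ioi (0:ℝ), (b * exp (-(b * x))) * (-(x ^ (-t)) / t) := key
  rw [hfin, hval]
  have hbt : ((1:ℝ)/b) ^ (1 - t) = b ^ (t - 1) := by
    rw [one_div, Real.inv_rpow hb.le, ← Real.rpow_neg hb.le]
    congr 1
    ring
  have hbb : b * b ^ (t - 1) = b ^ t := by
    nth_rewrite 1 [← Real.rpow_one b]
    rw [← Real.rpow_add hb]
    congr 1
    ring
  rw [hbt, show (0:ℝ) - 0 - (-(b/t) * (b ^ (t-1) * Gamma (1-t)))
      = (b * b ^ (t-1)) * Gamma (1-t) / t by ring, hbb]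

-- substitution y = x^(-q) on Ioi 0
lemma integral_comp_inv_rpow {q : ℝ} (hq : 0 < q) (f : ℝ → ℝ) :
    ∫ x in Ioi (0:ℝ), q * x ^ (-q - 1) * f (x ^ (-q)) = ∫ y in Ioi (0:ℝ), f y := by
  have h := integral_comp_rpow_Ioi f (p := -q) (by simp [hq.ne'] : (-q:ℝ) ≠ 0)
  rw [← h]
  refine setIntegral_congr_fun measurableSet_Ioi (fun x hx => ?_)
  rw [abs_neg, abs_of_pos hq]
  simp only [smul_eq_mul]

lemma integrableOn_comp_inv_rpow {q : ℝ} (hq : 0 < q) (f : ℝ → ℝ)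
    (hf : IntegrableOn f (Ioi (0:ℝ))) :
    IntegrableOn (fun x => q * x ^ (-q - 1) * f (x ^ (-q))) (Ioi (0:ℝ)) := by
  have h := (integrableOn_Ioi_comp_rpow_iff f (p := -q) (by simp [hq.ne'] : (-q:ℝ) ≠ 0)).mpr hf
  refine h.congr_fun (fun x hx => ?_) measurableSet_Ioi
  rw [abs_neg, abs_of_pos hq]
  simp only [smul_eq_mul]

lemma one_sub_exp_le2 (x : ℝ) : 1 - exp (-x) ≤ x := by
  have := add_one_le_exp (-x); linarith

-- I3 : value
lemma integral_exp_inv_rpow {b q : ℝ} (hb : 0 < b) (hq : 0 < q) :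
    ∫ r in Ioi (0:ℝ), exp (-(b * r ^ (-q))) * r ^ (-q - 1) = 1 / (q * b) := by
  have hfi : ∫ y in Ioi (0:ℝ), (1/q) * exp (-(b * y)) = 1/(q*b) := by
    rw [MeasureTheory.integral_const_mul]
    have : ∫ y in Ioi (0:ℝ), exp (-(b * y)) = 1/b := by
      have h := integral_rpow_mul_exp_neg_mul_Ioi (a := 1) one_pos hb
      simp only [sub_self, Real.rpow_one, Real.rpow_zero, one_mul, Real.Gamma_one, mul_one] at h
      rw [h]
    rw [this]
    field_simp
  rw [← hfi, ← integral_comp_inv_rpow hq (fun y => (1/q) * exp (-(b * y)))]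
  refine setIntegral_congr_fun measurableSet_Ioi (fun x hx => ?_)
  field_simp

-- I3 : integrability
lemma integrableOn_exp_inv_rpow {b q : ℝ} (hb : 0 < b) (hq : 0 < q) :
    IntegrableOn (fun r => exp (-(b * r ^ (-q))) * r ^ (-q - 1)) (Ioi (0:ℝ)) := by
  have hf : IntegrableOn (fun y => (1/q) * exp (-(b * y))) (Ioi (0:ℝ)) :=
    ((exp_neg_integrableOn_Ioi 0 hb).congr_fun
      (fun x _ => by rw [neg_mul]) measurableSet_Ioi).const_mul _
  have h := integrableOn_comp_inv_rpow hq _ hf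
  refine h.congr_fun (fun x hx => ?_) measurableSet_Ioi
  field_simp

section ModelI1
variable {b q : ℝ}

-- I1 : value (uses integral_one_sub_exp_rpow proven in h2)
lemma integral_model_of_aux (hb : 0 < b) (hq : 2 < q)
    (haux : ∫ x in Ioi (0:ℝ), (1 - exp (-(b * x))) * x ^ (-(2/q) - 1)
      = b ^ (2/q) * Gamma (1 - 2/q) / (2/q))
    (hauxint : IntegrableOn (fun x => (1 - exp (-(b * x))) * x ^ (-(2/q) - 1)) (Ioi (0:ℝ))) :
    (∫ r in Ioi (0:ℝ), (1 - exp (-(b * r ^ (-q)))) * r = b ^ (2/q) * Gamma (1 - 2/q) / 2)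
    ∧ IntegrableOn (fun r => (1 - exp (-(b * r ^ (-q)))) * r) (Ioi (0:ℝ)) := by
  have hq0 : (0:ℝ) < q := by linarith
  set f : ℝ → ℝ := fun u => (1/q) * ((1 - exp (-(b * u))) * u ^ (-(2/q) - 1)) with hf_def
  have hptw : ∀ x ∈ Ioi (0:ℝ),
      q * x ^ (-q - 1) * f (x ^ (-q)) = (1 - exp (-(b * x ^ (-q)))) * x := by
    intro x hx
    have hx0 : (0:ℝ) < x := hx
    have hpow : (x ^ (-q)) ^ (-(2/q) - 1) = x ^ (q + 2) := by
      rw [← Real.rpow_mul hx0.le]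
      congr 1
      field_simp
      ring
    have hcomb : x ^ (-q - 1) * x ^ (q + 2) = x := by
      rw [← Real.rpow_add hx0, show (-q - 1) + (q + 2) = (1:ℝ) by ring, Real.rpow_one]
    simp only [hf_def]
    rw [hpow]
    field_simp
    linear_combination (1 - exp (-(b * x ^ (-q)))) * hcomb
  constructor
  · have h := integral_comp_inv_rpow hq0 f
    rw [← setIntegral_congr_fun measurableSet_Ioi hptw, h, hf_def,
      MeasureTheory.integral_const_mul, haux]
    field_simp
  · have hfint : IntegrableOn f (Ioi (0:ℝ)) := hauxint.const_mul _
    exact (integrableOn_comp_inv_rpow hq0 f hfint).congr_fun hptw measurableSet_Ioi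

end ModelI1

-- I2 : value and integrability of s ↦ exp (-(K * s^p)), 0 < p
lemma integral_exp_neg_mul_rpow' {K p : ℝ} (hK : 0 < K) (hp : 0 < p) :
    ∫ s in Ioi (0:ℝ), exp (-(K * s ^ p)) = K ^ (-(1/p)) * Gamma (1/p + 1) := by
  have h := integral_exp_neg_mul_rpow hp hK
  simp only [neg_mul] at h
  rw [h, neg_div]

lemma integrableOn_exp_neg_mul_rpow {K p : ℝ} (hK : 0 < K) (hp : 0 < p) :
    IntegrableOn (fun s => exp (-(K * s ^ p))) (Ioi (0:ℝ)) := by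
  have hp' : (1/p : ℝ) ≠ 0 := by positivity
  rw [← integrableOn_Ioi_comp_rpow_iff _ hp']
  have hbase : IntegrableOn (fun x => |1/p| * (x ^ (1/p - 1) * exp (-(K * x)))) (Ioi (0:ℝ)) :=
    (integrableOn_rpow_mul_exp_neg_mul (by positivity) hK).const_mul _
  refine hbase.congr_fun (fun x hx => ?_) measurableSet_Ioi
  have hx0 : (0:ℝ) < x := hx
  rw [smul_eq_mul, ← Real.rpow_mul hx0.le, one_div_mul_cancel hp.ne', Real.rpow_one]
  ring

lemma one_sub_exp_add_le {x y : ℝ} (hx : 0 ≤ x) (hy : 0 ≤ y) :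
    1 - exp (-(x + y)) ≤ (1 - exp (-x)) + (1 - exp (-y)) := by
  have h1 : exp (-(x + y)) = exp (-x) * exp (-y) := by rw [neg_add, exp_add]
  have h2 : exp (-x) ≤ 1 := exp_le_one_iff.mpr (by linarith)
  have h3 : exp (-y) ≤ 1 := exp_le_one_iff.mpr (by linarith)
  nlinarith

lemma model_I1 {b q : ℝ} (hb : 0 < b) (hq : 2 < q) :
    (∫ r in Ioi (0:ℝ), (1 - exp (-(b * r ^ (-q)))) * r = b ^ (2/q) * Gamma (1 - 2/q) / 2)
    ∧ IntegrableOn (fun r => (1 - exp (-(b * r ^ (-q)))) * r) (Ioi (0:ℝ)) := by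
  have hq0 : (0:ℝ) < q := by linarith
  have ht0 : (0:ℝ) < 2/q := by positivity
  have ht1 : (2/q:ℝ) < 1 := by rw [div_lt_one hq0]; linarith
  exact integral_model_of_aux hb hq (integral_one_sub_exp_rpow hb ht0 ht1)
    (integrableOn_one_sub_exp_rpow hb ht0 ht1)

set_option maxHeartbeats 1000000 in
lemma CRB_main_bounds (γ c lam ρ We : ℝ) (hγ : 2 < γ) (hc : 0 < c) (hlam : 0 < lam)
    (hρ : 0 < ρ) (hWe : 0 < We) :
    0 < c ^ 2 / (ρ * We) * (π * lam) ^ (-(γ / 2)) * Gamma (1 - 2 / γ) ^ (-(γ / 2))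
        * Gamma (1 + γ / 2) ∧
    (4 / ρ) * (∫ s in Ioi (0 : ℝ), exp (-(2 * π * lam * ∫ r in Ioi (0 : ℝ),
        (1 - exp (-s * (r ^ (-γ - 2) * (γ ^ 2 + 4 * We * r ^ 2 / c ^ 2)))) * r)))
      ≤ c ^ 2 / (ρ * We) * (π * lam) ^ (-(γ / 2)) * Gamma (1 - 2 / γ) ^ (-(γ / 2))
        * Gamma (1 + γ / 2) ∧
    (1 - π * lam * c ^ 2 * γ / (2 * We)) * (c ^ 2 / (ρ * We) * (π * lam) ^ (-(γ / 2))
        * Gamma (1 - 2 / γ) ^ (-(γ / 2)) * Gamma (1 + γ / 2))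
      < (4 / ρ) * (∫ s in Ioi (0 : ℝ), exp (-(2 * π * lam * ∫ r in Ioi (0 : ℝ),
        (1 - exp (-s * (r ^ (-γ - 2) * (γ ^ 2 + 4 * We * r ^ 2 / c ^ 2)))) * r))) := by
  have hγ0 : (0:ℝ) < γ := by linarith
  have hπ : (0:ℝ) < π := pi_pos
  set a : ℝ := 4 * We / c ^ 2 with ha_def
  have ha : 0 < a := by positivity
  have ht0 : (0:ℝ) < 2 / γ := by positivity
  have ht1 : (2:ℝ) / γ < 1 := by rw [div_lt_one hγ0]; linarith
  have hG1 : 0 < Gamma (1 - 2 / γ) := Gamma_pos_of_pos (by linarith)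
  set Zin : ℝ → ℝ → ℝ := fun s r =>
    (1 - exp (-s * (r ^ (-γ - 2) * (γ ^ 2 + 4 * We * r ^ 2 / c ^ 2)))) * r with hZin_def
  set Z : ℝ → ℝ := fun s => ∫ r in Ioi (0:ℝ), Zin s r with hZ_def
  have hrepr : (∫ s in Ioi (0 : ℝ), exp (-(2 * π * lam * ∫ r in Ioi (0 : ℝ),
        (1 - exp (-s * (r ^ (-γ - 2) * (γ ^ 2 + 4 * We * r ^ 2 / c ^ 2)))) * r)))
      = ∫ s in Ioi (0:ℝ), exp (-(2 * π * lam * Z s)) := by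
    simp only [hZ_def, hZin_def]
  -- pointwise split of the exponent
  have hsplit : ∀ s : ℝ, ∀ r ∈ Ioi (0:ℝ),
      -s * (r ^ (-γ - 2) * (γ ^ 2 + 4 * We * r ^ 2 / c ^ 2))
        = -((s * γ ^ 2) * r ^ (-(γ + 2)) + (s * a) * r ^ (-γ)) := by
    intro s r hr
    have hr0 : (0:ℝ) < r := hr
    have h2 : r ^ (-γ) = r ^ (-(γ + 2)) * r ^ 2 := by
      rw [← Real.rpow_natCast r 2, ← Real.rpow_add hr0]
      norm_num
    rw [h2, show (-γ - 2 : ℝ) = -(γ + 2) by ring, ha_def]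
    field_simp
  -- models
  have hWmod : ∀ s : ℝ, 0 < s →
      (∫ r in Ioi (0:ℝ), (1 - exp (-((s*a) * r ^ (-γ)))) * r
        = (s*a) ^ (2/γ) * Gamma (1 - 2/γ) / 2)
      ∧ IntegrableOn (fun r => (1 - exp (-((s*a) * r ^ (-γ)))) * r) (Ioi (0:ℝ)) :=
    fun s hs => model_I1 (mul_pos hs ha) hγ
  have hGmod : ∀ s : ℝ, 0 < s →
      IntegrableOn (fun r => (1 - exp (-((s*γ^2) * r ^ (-(γ+2))))) * r) (Ioi (0:ℝ)) := by
    intro s hs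
    exact (model_I1 (by positivity) (by linarith : 2 < γ+2)).2
  -- continuity of Zin s on Ioi 0
  have hZcont : ∀ s : ℝ, ContinuousOn (Zin s) (Ioi (0:ℝ)) := by
    intro s
    simp only [hZin_def]
    apply ContinuousOn.mul ?_ continuousOn_id
    apply (continuousOn_const.sub ?_)
    apply ContinuousOn.rexp
    apply ContinuousOn.mul continuousOn_const
    apply ContinuousOn.mul
    · intro x hx
      exact (Real.continuousAt_rpow_const x _ (Or.inl (ne_of_gt hx))).continuousWithinAt
    · fun_prop
  -- integrability of Zin s
  have hZint : ∀ s : ℝ, 0 < s → IntegrableOn (Zin s) (Ioi (0:ℝ)) := by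
    intro s hs
    refine Integrable.mono' ((hGmod s hs).add (hWmod s hs).2)
      ((hZcont s).aestronglyMeasurable measurableSet_Ioi) ?_
    refine (ae_restrict_iff' measurableSet_Ioi).mpr (Eventually.of_forall fun r hr => ?_)
    have hr0 : (0:ℝ) < r := hr
    have hx1 : 0 ≤ (s*γ^2) * r ^ (-(γ+2)) := by positivity
    have hx2 : 0 ≤ (s*a) * r ^ (-γ) := by positivity
    have hE := hsplit s r hr
    have hnn : 0 ≤ Zin s r := by
      simp only [hZin_def]
      rw [hE]
      have : exp (-((s*γ^2) * r ^ (-(γ+2)) + (s*a) * r ^ (-γ))) ≤ 1 :=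
        exp_le_one_iff.mpr (by linarith)
      nlinarith
    rw [norm_of_nonneg hnn]
    simp only [hZin_def, Pi.add_apply]
    rw [hE]
    have hb2 := one_sub_exp_add_le hx1 hx2
    have := mul_le_mul_of_nonneg_right hb2 hr0.le
    rw [add_mul] at this
    linarith
  -- Z below by W model
  have hZ_ge : ∀ s : ℝ, 0 < s → (s*a) ^ (2/γ) * Gamma (1 - 2/γ) / 2 ≤ Z s := by
    intro s hs
    rw [← (hWmod s hs).1, hZ_def]
    refine setIntegral_mono_on (hWmod s hs).2 (hZint s hs) measurableSet_Ioi fun r hr => ?_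
    have hr0 : (0:ℝ) < r := hr
    have hx1 : 0 ≤ (s*γ^2) * r ^ (-(γ+2)) := by positivity
    simp only [hZin_def]
    rw [hsplit s r hr]
    have hexp : exp (-((s*γ^2) * r ^ (-(γ+2)) + (s*a) * r ^ (-γ)))
        ≤ exp (-((s*a) * r ^ (-γ))) := exp_le_exp.mpr (by linarith)
    nlinarith
  -- difference representation
  have hDdef : ∀ s : ℝ, 0 < s →
      Z s - (s*a) ^ (2/γ) * Gamma (1 - 2/γ) / 2
        = ∫ r in Ioi (0:ℝ), (Zin s r - (1 - exp (-((s*a) * r ^ (-γ)))) * r) := by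
    intro s hs
    rw [integral_sub (hZint s hs) (hWmod s hs).2, ← (hWmod s hs).1, hZ_def]
  have hD_le : ∀ s : ℝ, 0 < s → Z s - (s*a) ^ (2/γ) * Gamma (1 - 2/γ) / 2 ≤ γ / a := by
    intro s hs
    rw [hDdef s hs]
    have hR : ∫ r in Ioi (0:ℝ), (s*γ^2) * (exp (-((s*a) * r ^ (-γ))) * r ^ (-γ-1))
        = (s*γ^2) * (1/(γ*(s*a))) := by
      rw [MeasureTheory.integral_const_mul, integral_exp_inv_rpow (mul_pos hs ha) hγ0]
    have hRle : (s*γ^2) * (1/(γ*(s*a))) = γ / a := by field_simp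
    rw [← hRle, ← hR]
    refine setIntegral_mono_on ((hZint s hs).sub (hWmod s hs).2)
      ((integrableOn_exp_inv_rpow (mul_pos hs ha) hγ0).const_mul _) measurableSet_Ioi
      fun r hr => ?_
    have hr0 : (0:ℝ) < r := hr
    simp only [hZin_def]
    rw [hsplit s r hr]
    have key : 1 - exp (-((s*γ^2) * r ^ (-(γ+2)))) ≤ (s*γ^2) * r ^ (-(γ+2)) :=
      one_sub_exp_le2 _
    have hfac : exp (-((s*γ^2) * r ^ (-(γ+2)) + (s*a) * r ^ (-γ)))
        = exp (-((s*a) * r ^ (-γ))) * exp (-((s*γ^2) * r ^ (-(γ+2)))) := by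
      rw [← exp_add]; ring_nf
    have hpow : r ^ (-(γ+2)) * r = r ^ (-γ-1) := by
      rw [show (-γ-1:ℝ) = -(γ+2) + 1 by ring, Real.rpow_add hr0, Real.rpow_one]
    rw [hfac, ← hpow]
    have he2 : (0:ℝ) < exp (-((s*a) * r ^ (-γ))) := exp_pos _
    nlinarith [mul_le_mul_of_nonneg_right
      (mul_le_mul_of_nonneg_left key he2.le) hr0.le]
  have hD_pos : ∀ s : ℝ, 0 < s → 0 < Z s - (s*a) ^ (2/γ) * Gamma (1 - 2/γ) / 2 := by
    intro s hs
    rw [hDdef s hs]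
    have hδpos : ∀ r ∈ Ioi (0:ℝ), 0 < Zin s r - (1 - exp (-((s*a) * r ^ (-γ)))) * r := by
      intro r hr
      have hr0 : (0:ℝ) < r := hr
      simp only [hZin_def]
      rw [hsplit s r hr]
      have hx1 : 0 < (s*γ^2) * r ^ (-(γ+2)) := by positivity
      have hlt : exp (-((s*γ^2) * r ^ (-(γ+2)) + (s*a) * r ^ (-γ)))
          < exp (-((s*a) * r ^ (-γ))) := exp_lt_exp.mpr (by linarith)
      nlinarith
    rw [setIntegral_pos_iff_support_of_nonneg_ae
      ((ae_restrict_iff' measurableSet_Ioi).mpr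
        (Eventually.of_forall fun r hr => (hδpos r hr).le))
      ((hZint s hs).sub (hWmod s hs).2)]
    have hsub : Ioi (0:ℝ) ⊆ Function.support
        (fun r => Zin s r - (1 - exp (-((s*a) * r ^ (-γ)))) * r) ∩ Ioi 0 :=
      fun r hr => ⟨ne_of_gt (hδpos r hr), hr⟩
    refine lt_of_lt_of_le ?_ (measure_mono hsub)
    rw [Real.volume_Ioi]
    exact ENNReal.zero_lt_top
  -- s-level constants
  set K : ℝ := 2 * π * lam * (a ^ (2/γ) * Gamma (1 - 2/γ) / 2) with hK_def
  have hK : 0 < K := by positivity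
  set B : ℝ := 2 * π * lam * (γ / a) with hB_def
  have hφ_eq : ∀ s : ℝ, 0 < s →
      2 * π * lam * ((s*a) ^ (2/γ) * Gamma (1 - 2/γ) / 2) = K * s ^ (2/γ) := by
    intro s hs
    rw [Real.mul_rpow hs.le ha.le, hK_def]
    ring
  have hup : ∀ s ∈ Ioi (0:ℝ), exp (-(2 * π * lam * Z s)) ≤ exp (-(K * s ^ (2/γ))) := by
    intro s hs
    apply exp_le_exp.mpr
    rw [← hφ_eq s hs]
    have h := mul_le_mul_of_nonneg_left (hZ_ge s hs)
      (by positivity : (0:ℝ) ≤ 2 * π * lam)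
    linarith
  have hlow : ∀ s ∈ Ioi (0:ℝ),
      (1 - B) * exp (-(K * s ^ (2/γ))) < exp (-(2 * π * lam * Z s)) := by
    intro s hs
    have hD1 := hD_pos s hs
    have hD2 := hD_le s hs
    set D := Z s - (s*a) ^ (2/γ) * Gamma (1 - 2/γ) / 2 with hD_def
    have hsplit2 : -(2 * π * lam * Z s) = -(K * s ^ (2/γ)) + -(2*π*lam*D) := by
      rw [← hφ_eq s hs, hD_def]; ring
    rw [hsplit2, exp_add]
    have hprod : (0:ℝ) < 2*π*lam*D := by
      have : (0:ℝ) < 2*π*lam := by positivity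
      exact mul_pos this hD1
    have h1 : 1 - 2*π*lam*D < exp (-(2*π*lam*D)) := by
      have := add_one_lt_exp (ne_of_lt (neg_lt_zero.mpr hprod))
      linarith
    have h2 : 1 - B ≤ 1 - 2*π*lam*D := by
      have h := mul_le_mul_of_nonneg_left hD2 (by positivity : (0:ℝ) ≤ 2 * π * lam)
      rw [hB_def]
      linarith
    have hφpos : (0:ℝ) < exp (-(K * s ^ (2/γ))) := exp_pos _
    calc (1-B) * exp (-(K * s ^ (2/γ)))
        ≤ (1 - 2*π*lam*D) * exp (-(K*s^(2/γ))) :=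
          mul_le_mul_of_nonneg_right h2 hφpos.le
      _ < exp (-(2*π*lam*D)) * exp (-(K*s^(2/γ))) :=
          mul_lt_mul_of_pos_right h1 hφpos
      _ = exp (-(K * s ^ (2/γ))) * exp (-(2*π*lam*D)) := by ring
  -- measurability
  have hZmeas : StronglyMeasurable Z := by
    rw [hZ_def]
    simp only [hZin_def]
    have hF : Measurable (fun p : ℝ × ℝ =>
        (1 - exp (-p.1 * (p.2 ^ (-γ - 2) * (γ ^ 2 + 4 * We * p.2 ^ 2 / c ^ 2)))) * p.2) := by
      fun_prop
    exact hF.stronglyMeasurable.integral_prod_right'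
  have hmeasE : AEStronglyMeasurable (fun s => exp (-(2 * π * lam * Z s)))
      (volume.restrict (Ioi (0:ℝ))) := by
    have : Measurable fun s => exp (-(2 * π * lam * Z s)) :=
      (measurable_exp.comp ((hZmeas.measurable.const_mul _).neg))
    exact this.aestronglyMeasurable
  -- s-integrals
  have hφint : IntegrableOn (fun s => exp (-(K * s ^ (2/γ)))) (Ioi (0:ℝ)) :=
    integrableOn_exp_neg_mul_rpow hK ht0
  have hIint : IntegrableOn (fun s => exp (-(2 * π * lam * Z s))) (Ioi (0:ℝ)) := by
    refine Integrable.mono' hφint hmeasE ?_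
    refine (ae_restrict_iff' measurableSet_Ioi).mpr (Eventually.of_forall fun s hs => ?_)
    rw [norm_of_nonneg (exp_pos _).le]
    exact hup s hs
  have hIle : ∫ s in Ioi (0:ℝ), exp (-(2 * π * lam * Z s))
      ≤ ∫ s in Ioi (0:ℝ), exp (-(K * s ^ (2/γ))) :=
    setIntegral_mono_on hIint hφint measurableSet_Ioi hup
  have hIgt : (1 - B) * ∫ s in Ioi (0:ℝ), exp (-(K * s ^ (2/γ)))
      < ∫ s in Ioi (0:ℝ), exp (-(2 * π * lam * Z s)) := by
    have hψint : IntegrableOn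
        (fun s => exp (-(2 * π * lam * Z s)) - (1-B) * exp (-(K * s ^ (2/γ))))
        (Ioi (0:ℝ)) := hIint.sub (hφint.const_mul _)
    have hψpos : 0 < ∫ s in Ioi (0:ℝ),
        (exp (-(2 * π * lam * Z s)) - (1-B) * exp (-(K * s ^ (2/γ)))) := by
      rw [setIntegral_pos_iff_support_of_nonneg_ae
        ((ae_restrict_iff' measurableSet_Ioi).mpr
          (Eventually.of_forall fun s hs => show (0:ℝ) ≤ exp (-(2 * π * lam * Z s))
            - (1-B) * exp (-(K * s ^ (2/γ))) by linarith [hlow s hs])) hψint]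
      have hsub : Ioi (0:ℝ) ⊆ Function.support
          (fun s => exp (-(2 * π * lam * Z s)) - (1-B) * exp (-(K * s ^ (2/γ)))) ∩ Ioi 0 :=
        fun s hs => ⟨ne_of_gt (show (0:ℝ) < exp (-(2 * π * lam * Z s))
          - (1-B) * exp (-(K * s ^ (2/γ))) by linarith [hlow s hs]), hs⟩
      refine lt_of_lt_of_le ?_ (measure_mono hsub)
      rw [Real.volume_Ioi]
      exact ENNReal.zero_lt_top
    rw [integral_sub hIint (hφint.const_mul _), MeasureTheory.integral_const_mul] at hψpos
    linarith
  -- value of model integral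
  have hφval : ∫ s in Ioi (0:ℝ), exp (-(K * s ^ (2/γ)))
      = K ^ (-(γ/2)) * Gamma (γ/2 + 1) := by
    rw [integral_exp_neg_mul_rpow' hK ht0, one_div_div]
  -- final constants
  have hKL : (4/ρ) * (K ^ (-(γ/2)) * Gamma (γ/2 + 1))
      = c ^ 2 / (ρ * We) * (π * lam) ^ (-(γ / 2)) * Gamma (1 - 2 / γ) ^ (-(γ / 2))
        * Gamma (1 + γ / 2) := by
    have hK2 : K = (π * lam) * ((Gamma (1 - 2/γ)) * a ^ (2/γ)) := by rw [hK_def]; ring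
    rw [hK2, Real.mul_rpow (by positivity) (by positivity),
      Real.mul_rpow hG1.le (by positivity), ← Real.rpow_mul ha.le,
      show (2/γ) * (-(γ/2)) = (-1 : ℝ) by field_simp,
      Real.rpow_neg_one, show a⁻¹ = c^2/(4*We) by rw [ha_def]; field_simp,
      add_comm (γ/2) 1]
    field_simp
  have hLpos : 0 < c ^ 2 / (ρ * We) * (π * lam) ^ (-(γ / 2))
      * Gamma (1 - 2 / γ) ^ (-(γ / 2)) * Gamma (1 + γ / 2) := by
    have h2 : 0 < Gamma (1 + γ / 2) := Gamma_pos_of_pos (by linarith)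
    positivity
  have hBB : π * lam * c ^ 2 * γ / (2 * We) = B := by
    rw [hB_def, ha_def]
    field_simp
    ring
  refine ⟨hLpos, ?_, ?_⟩
  · rw [hrepr]
    calc (4/ρ) * ∫ s in Ioi (0:ℝ), exp (-(2 * π * lam * Z s))
        ≤ (4/ρ) * ∫ s in Ioi (0:ℝ), exp (-(K * s ^ (2/γ))) :=
          mul_le_mul_of_nonneg_left hIle (by positivity)
      _ = _ := by rw [hφval, hKL]
  · rw [hrepr, hBB, ← hKL, ← hφval]
    have h4ρ : (0:ℝ) < 4/ρ := by positivity
    calc (1 - B) * ((4/ρ) * ∫ s in Ioi (0:ℝ), exp (-(K * s ^ (2/γ))))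
        = (4/ρ) * ((1 - B) * ∫ s in Ioi (0:ℝ), exp (-(K * s ^ (2/γ)))) := by ring
      _ < (4/ρ) * ∫ s in Ioi (0:ℝ), exp (-(2 * π * lam * Z s)) :=
          mul_lt_mul_of_pos_left hIgt h4ρ

end CRBHelpers

/-- Regarding `CRB_LB` and `CRB_LB,W` as functions of the effective bandwidth `W_e`
(with `γ, c, λ, ρ` fixed), the ratio `CRB_LB(W_e)/CRB_LB,W(W_e)` tends to `1` as
`W_e → ∞`, and for every `W_e > 0` the deficiency satisfies
`1 − CRB_LB(W_e)/CRB_LB,W(W_e) < πλ·c²·γ/(2·W_e)`. -/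
theorem CRB_LB_ratio_tendsto_one (γ c lam ρ : ℝ)
    (hγ : 2 < γ) (hc : 0 < c) (hlam : 0 < lam) (hρ : 0 < ρ)
    (CRB_LB CRB_LBW : ℝ → ℝ)
    (hLB : ∀ We > 0, CRB_LB We = (4 / ρ) * ∫ s in Set.Ioi (0 : ℝ),
      Real.exp (-(2 * π * lam *
        ∫ r in Set.Ioi (0 : ℝ),
          (1 - Real.exp (-s * (r ^ (-γ - 2) * (γ ^ 2 + 4 * We * r ^ 2 / c ^ 2)))) * r)))
    (hLBW : ∀ We > 0, CRB_LBW We = c ^ 2 / (ρ * We) * (π * lam) ^ (-(γ / 2))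
          * Real.Gamma (1 - 2 / γ) ^ (-(γ / 2)) * Real.Gamma (1 + γ / 2)) :
    Tendsto (fun We => CRB_LB We / CRB_LBW We) atTop (nhds 1) ∧
    ∀ We > 0, 1 - CRB_LB We / CRB_LBW We < π * lam * c ^ 2 * γ / (2 * We) := by
  have key : ∀ We > 0, CRB_LB We / CRB_LBW We ≤ 1 ∧
      1 - CRB_LB We / CRB_LBW We < π * lam * c ^ 2 * γ / (2 * We) := by
    intro We hWe
    obtain ⟨hLpos, hle, hlt⟩ := CRB_main_bounds γ c lam ρ We hγ hc hlam hρ hWe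
    rw [hLB We hWe, hLBW We hWe]
    constructor
    · exact (div_le_one hLpos).mpr hle
    · have h2 : 1 - π * lam * c ^ 2 * γ / (2 * We)
          < ((4 / ρ) * ∫ s in Set.Ioi (0 : ℝ), Real.exp (-(2 * π * lam *
            ∫ r in Set.Ioi (0 : ℝ),
              (1 - Real.exp (-s * (r ^ (-γ - 2) * (γ ^ 2 + 4 * We * r ^ 2 / c ^ 2)))) * r)))
            / (c ^ 2 / (ρ * We) * (π * lam) ^ (-(γ / 2))
              * Real.Gamma (1 - 2 / γ) ^ (-(γ / 2)) * Real.Gamma (1 + γ / 2)) := by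
        rw [lt_div_iff₀ hLpos]
        exact hlt
      linarith
  constructor
  · have h1 : Tendsto (fun We : ℝ => 1 - π * lam * c ^ 2 * γ / (2 * We)) atTop (nhds 1) := by
      have h0 : Tendsto (fun We : ℝ => π * lam * c ^ 2 * γ / (2 * We)) atTop (nhds 0) :=
        Tendsto.div_atTop tendsto_const_nhds (tendsto_id.const_mul_atTop two_pos)
      simpa using tendsto_const_nhds.sub h0
    refine tendsto_of_tendsto_of_tendsto_of_le_of_le' h1 tendsto_const_nhds ?_ ?_
    · filter_upwards [eventually_gt_atTop (0:ℝ)] with We hWe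
      have := (key We hWe).2
      linarith
    · filter_upwards [eventually_gt_atTop (0:ℝ)] with We hWe
      exact (key We hWe).1
  · intro We hWe
    exact (key We hWe).2
end

section
/- The integral (4/ρ)·∫₀^∞ exp(−2πλ·V(s))·2πλ·Q(s) ds converges and equals (16·W_e/(ρ·c²·γ⁴))·(πλ)^{−(γ+3)/2}·Γ(γ/(γ+2))^{−(γ+5)/2}·Γ((γ−1)/(γ+2))·Γ((γ+5)/2). -/
open MeasureTheory Real

open Set Filter

lemma key_integrable {a q : ℝ} (ha : 0 < a) (hq0 : 0 < q) (hq1 : q < 1) :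
    IntegrableOn (fun x => (1 - Real.exp (-(a * x))) * x ^ (-q - 1)) (Ioi (0:ℝ)) := by
  have hcont : ContinuousOn (fun x : ℝ => (1 - Real.exp (-(a * x))) * x ^ (-q - 1)) (Ioi 0) := by
    refine ContinuousOn.mul (by fun_prop) ?_
    exact fun x hx => (Real.continuousAt_rpow_const x _ (Or.inl (ne_of_gt hx))).continuousWithinAt
  have hbound : ∀ x ∈ Ioi (0:ℝ), 0 ≤ 1 - Real.exp (-(a * x)) ∧ 1 - Real.exp (-(a * x)) ≤ a * x := by
    intro x hx
    constructor
    · simp only [sub_nonneg]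
      exact Real.exp_le_one_iff.mpr (by nlinarith [hx.out])
    · nlinarith [Real.add_one_le_exp (-(a * x))]
  have h1 : IntegrableOn (fun x => (1 - Real.exp (-(a * x))) * x ^ (-q - 1)) (Ioc (0:ℝ) 1) := by
    have hbig : IntegrableOn (fun x : ℝ => a * x ^ (-q)) (Ioc (0:ℝ) 1) := by
      refine Integrable.const_mul ?_ a
      have := intervalIntegral.intervalIntegrable_rpow' (a := (0:ℝ)) (b := 1) (r := -q)
        (by linarith)
      rwa [intervalIntegrable_iff_integrableOn_Ioc_of_le (by norm_num : (0:ℝ) ≤ 1)] at this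
    refine Integrable.mono' hbig ((hcont.mono Ioc_subset_Ioi_self).aestronglyMeasurable
      measurableSet_Ioc) ?_
    filter_upwards [ae_restrict_mem measurableSet_Ioc] with x hx
    obtain ⟨h0, h1⟩ := hbound x hx.1
    have hxpos : (0:ℝ) < x := hx.1
    rw [Real.norm_eq_abs, abs_of_nonneg (mul_nonneg h0 (Real.rpow_nonneg hxpos.le _))]
    have hsplit : x ^ (-q - 1) = x ^ (-q) * x⁻¹ := by
      rw [show -q - 1 = -q + (-1) by ring, Real.rpow_add hxpos, Real.rpow_neg_one]
    calc (1 - Real.exp (-(a * x))) * x ^ (-q - 1)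
        ≤ (a * x) * x ^ (-q - 1) := by
          exact mul_le_mul_of_nonneg_right h1 (Real.rpow_nonneg hxpos.le _)
      _ = a * x ^ (-q) := by rw [hsplit]; field_simp
  have h2 : IntegrableOn (fun x => (1 - Real.exp (-(a * x))) * x ^ (-q - 1)) (Ioi (1:ℝ)) := by
    have hbig : IntegrableOn (fun x : ℝ => x ^ (-q - 1)) (Ioi (1:ℝ)) :=
      integrableOn_Ioi_rpow_of_lt (by linarith) one_pos
    refine Integrable.mono' hbig ((hcont.mono (Ioi_subset_Ioi (by norm_num))).aestronglyMeasurable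
      measurableSet_Ioi) ?_
    filter_upwards [ae_restrict_mem measurableSet_Ioi] with x hx
    have hxpos : (0:ℝ) < x := lt_trans one_pos hx
    obtain ⟨h0, _⟩ := hbound x hxpos
    rw [Real.norm_eq_abs, abs_of_nonneg (mul_nonneg h0 (Real.rpow_nonneg hxpos.le _))]
    have : 1 - Real.exp (-(a * x)) ≤ 1 := by nlinarith [Real.exp_pos (-(a*x))]
    nlinarith [Real.rpow_nonneg hxpos.le (-q-1), mul_le_mul_of_nonneg_right this
      (Real.rpow_nonneg hxpos.le (-q-1))]
  have : Ioc (0:ℝ) 1 ∪ Ioi 1 = Ioi 0 := Ioc_union_Ioi_eq_Ioi (by norm_num)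
  rw [← this]
  exact h1.union h2

lemma key_value {a q : ℝ} (ha : 0 < a) (hq0 : 0 < q) (hq1 : q < 1) :
    ∫ x in Ioi (0:ℝ), (1 - Real.exp (-(a * x))) * x ^ (-q - 1)
      = a ^ q * Real.Gamma (1 - q) / q := by
  set F : ℝ → ℝ := fun x => if x ≤ 0 then 0 else -((1 - Real.exp (-(a * x))) * x ^ (-q)) / q
    with hFdef
  set f' : ℝ → ℝ := fun x =>
    (1 - Real.exp (-(a * x))) * x ^ (-q - 1) - a / q * (Real.exp (-(a * x)) * x ^ (-q))
    with hf'def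
  have hexp_int : IntegrableOn (fun x => Real.exp (-(a * x)) * x ^ (-q)) (Ioi (0:ℝ)) := by
    have h := integrableOn_rpow_mul_exp_neg_mul_rpow (p := 1) (s := -q) (b := a)
      (by linarith) one_pos ha
    refine h.congr_fun (fun x hx => ?_) measurableSet_Ioi
    beta_reduce
    rw [Real.rpow_one, neg_mul, mul_comm]
  have hF'int : IntegrableOn f' (Ioi (0:ℝ)) :=
    (key_integrable ha hq0 hq1).sub (hexp_int.const_mul _)
  have hderiv : ∀ x ∈ Ioi (0:ℝ), HasDerivAt F (f' x) x := by
    intro x hx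
    have hxpos : (0:ℝ) < x := hx
    have h1 : HasDerivAt (fun y : ℝ => -(a * y)) (-a) x := by
      exact ((hasDerivAt_id' x).const_mul a).neg.congr_deriv (by ring)
    have h2 : HasDerivAt (fun y : ℝ => Real.exp (-(a * y))) (Real.exp (-(a * x)) * (-a)) x :=
      h1.exp
    have hu : HasDerivAt (fun y : ℝ => 1 - Real.exp (-(a * y))) (a * Real.exp (-(a * x))) x := by
      exact ((hasDerivAt_const x (1:ℝ)).sub h2).congr_deriv (by ring)
    have hv : HasDerivAt (fun y : ℝ => y ^ (-q)) (-q * x ^ (-q - 1)) x :=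
      Real.hasDerivAt_rpow_const (p := -q) (Or.inl (ne_of_gt hxpos))
    have hform : HasDerivAt (fun y : ℝ => -((1 - Real.exp (-(a * y))) * y ^ (-q)) / q)
        (f' x) x := by
      refine (((hu.mul hv).neg).div_const q).congr_deriv ?_
      rw [hf'def]
      field_simp
      ring
    refine hform.congr_of_eventuallyEq ?_
    filter_upwards [Ioi_mem_nhds hxpos] with y hy
    simp [hFdef, not_le.mpr (mem_Ioi.mp hy)]
  have hcont : ContinuousWithinAt F (Ici (0:ℝ)) 0 := by
    have hF0 : F 0 = 0 := by simp [hFdef]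
    rw [ContinuousWithinAt, hF0]
    have hb : Tendsto (fun x : ℝ => a / q * x ^ (1 - q)) (nhdsWithin 0 (Ici 0)) (nhds 0) := by
      have hc : ContinuousAt (fun x : ℝ => x ^ (1 - q)) 0 :=
        Real.continuousAt_rpow_const 0 (1 - q) (Or.inr (by linarith))
      have := (hc.tendsto.mono_left (nhdsWithin_le_nhds (s := Ici (0:ℝ)))).const_mul (a / q)
      simpa [Real.zero_rpow (show (1:ℝ) - q ≠ 0 by linarith)] using this
    refine squeeze_zero_norm' ?_ hb
    filter_upwards [self_mem_nhdsWithin] with x hx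
    rcases le_or_gt x 0 with h | h
    · simp only [hFdef, if_pos h, norm_zero]
      exact mul_nonneg (by positivity) (Real.rpow_nonneg hx _)
    · have h0 : 0 ≤ 1 - Real.exp (-(a * x)) := by
        simp only [sub_nonneg]
        exact Real.exp_le_one_iff.mpr (by nlinarith)
      have h1 : 1 - Real.exp (-(a * x)) ≤ a * x := by
        nlinarith [Real.add_one_le_exp (-(a * x))]
      simp only [hFdef, if_neg (not_le.mpr h)]
      rw [Real.norm_eq_abs, abs_div, abs_neg, abs_of_nonneg (mul_nonneg h0
        (Real.rpow_nonneg h.le _)), abs_of_pos hq0, div_le_iff₀ hq0]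
      have hxq : x ^ (1 - q) = x * x ^ (-q) := by
        rw [show (1:ℝ) - q = 1 + (-q) by ring, Real.rpow_add h, Real.rpow_one]
      calc (1 - Real.exp (-(a * x))) * x ^ (-q)
          ≤ a * x * x ^ (-q) := mul_le_mul_of_nonneg_right h1 (Real.rpow_nonneg h.le _)
        _ = a / q * x ^ (1 - q) * q := by rw [hxq]; field_simp
  have htop : Tendsto F atTop (nhds 0) := by
    have hb : Tendsto (fun x : ℝ => 1 / q * x ^ (-q)) atTop (nhds 0) := by
      have := (tendsto_rpow_neg_atTop hq0).const_mul (1 / q)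
      simpa using this
    refine squeeze_zero_norm' ?_ hb
    filter_upwards [Filter.eventually_gt_atTop 0] with x hx
    have h0 : 0 ≤ 1 - Real.exp (-(a * x)) := by
      simp only [sub_nonneg]
      exact Real.exp_le_one_iff.mpr (by nlinarith)
    have h1 : 1 - Real.exp (-(a * x)) ≤ 1 := by nlinarith [Real.exp_pos (-(a * x))]
    simp only [hFdef, if_neg (not_le.mpr hx)]
    rw [Real.norm_eq_abs, abs_div, abs_neg, abs_of_nonneg (mul_nonneg h0
      (Real.rpow_nonneg hx.le _)), abs_of_pos hq0, div_le_iff₀ hq0, one_div]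
    calc (1 - Real.exp (-(a * x))) * x ^ (-q)
        ≤ 1 * x ^ (-q) := mul_le_mul_of_nonneg_right h1 (Real.rpow_nonneg hx.le _)
      _ = q⁻¹ * x ^ (-q) * q := by field_simp
  have hFTC : ∫ x in Ioi (0:ℝ), f' x = 0 - F 0 :=
    integral_Ioi_of_hasDerivAt_of_tendsto hcont hderiv hF'int htop
  have hF0 : F 0 = 0 := by simp [hFdef]
  have hexp_val : ∫ x in Ioi (0:ℝ), Real.exp (-(a * x)) * x ^ (-q)
      = a ^ (q - 1) * Real.Gamma (1 - q) := by
    have h := integral_rpow_mul_exp_neg_mul_rpow (p := 1) (q := -q) (b := a)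
      one_pos (by linarith) ha
    rw [show ∫ x in Ioi (0:ℝ), Real.exp (-(a * x)) * x ^ (-q)
        = ∫ x in Ioi (0:ℝ), x ^ (-q) * Real.exp (-a * x ^ (1:ℝ)) from
      setIntegral_congr_fun measurableSet_Ioi (fun x _ => by rw [Real.rpow_one, neg_mul, mul_comm]),
      h]
    norm_num
    rw [show (-1:ℝ) + q = q - 1 by ring, show -q + 1 = 1 - q by ring]
  have hsum : ∀ x : ℝ, (1 - Real.exp (-(a * x))) * x ^ (-q - 1)
      = f' x + a / q * (Real.exp (-(a * x)) * x ^ (-q)) := fun x => by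
    rw [hf'def]; ring
  rw [setIntegral_congr_fun measurableSet_Ioi (fun x _ => hsum x),
    integral_add hF'int (hexp_int.const_mul _), hFTC, hF0, integral_const_mul, hexp_val]
  rw [show q = 1 + (q - 1) by ring, Real.rpow_add ha, Real.rpow_one]
  field_simp
  ring

lemma V_value {γ a : ℝ} (hγ : 2 < γ) (ha : 0 < a) :
    ∫ r in Ioi (0:ℝ), (1 - Real.exp (-(a * r ^ (-γ - 2)))) * r
      = a ^ (2 / (γ + 2)) * Real.Gamma (γ / (γ + 2)) / 2 := by
  have hβ : (0:ℝ) < γ + 2 := by linarith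
  set p : ℝ := -1 / (γ + 2) with hp
  have hplt : p < 0 := by rw [hp]; exact div_neg_of_neg_of_pos (by norm_num) hβ
  have hpne : p ≠ 0 := ne_of_lt hplt
  have hq0 : (0:ℝ) < 2 / (γ + 2) := by positivity
  have hq1 : 2 / (γ + 2) < 1 := by rw [div_lt_one hβ]; linarith
  have hsub := integral_comp_rpow_Ioi (fun y => (1 - Real.exp (-(a * y ^ (-γ - 2)))) * y) hpne
  have hpt : ∀ x ∈ Ioi (0:ℝ),
      (|p| * x ^ (p - 1)) • ((fun y => (1 - Real.exp (-(a * y ^ (-γ - 2)))) * y) (x ^ p))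
        = 1 / (γ + 2) * ((1 - Real.exp (-(a * x))) * x ^ (-(2 / (γ + 2)) - 1)) := by
    intro x hx
    have hxpos : (0:ℝ) < x := hx
    have h1 : (x ^ p) ^ (-γ - 2) = x := by
      rw [← Real.rpow_mul hxpos.le, show p * (-γ - 2) = 1 by rw [hp]; field_simp; ring,
        Real.rpow_one]
    have h2 : |p| = 1 / (γ + 2) := by
      rw [abs_of_neg hplt, hp]; ring
    have h3 : x ^ (p - 1) * x ^ p = x ^ (-(2 / (γ + 2)) - 1) := by
      rw [← Real.rpow_add hxpos]
      congr 1
      rw [hp]; ring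
    simp only [smul_eq_mul, h1, h2]
    rw [← h3]
    ring
  rw [← hsub, setIntegral_congr_fun measurableSet_Ioi hpt, integral_const_mul,
    key_value ha hq0 hq1, show 1 - 2 / (γ + 2) = γ / (γ + 2) by field_simp; ring]
  field_simp

/-- With `V(s) = ∫₀^∞ (1 − exp(−s·γ²·r^{−γ−2}))·r dr` and
`Q(s) = (4·s·W_e/(c²·(γ+2)))·(s·γ²)^{(1−γ)/(γ+2)}·Γ((γ−1)/(γ+2))`, the integral
`(4/ρ)·∫₀^∞ exp(−2πλ·V(s))·2πλ·Q(s) ds` converges and equals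
`(16·W_e/(ρ·c²·γ⁴))·(πλ)^{−(γ+3)/2}·Γ(γ/(γ+2))^{−(γ+5)/2}·Γ((γ−1)/(γ+2))·Γ((γ+5)/2)`. -/
theorem narrowband_error_integral_closed_form (γ We c lam ρ : ℝ)
    (hγ : 2 < γ) (hWe : 0 < We) (hc : 0 < c) (hlam : 0 < lam) (hρ : 0 < ρ)
    (V Q : ℝ → ℝ)
    (hV : ∀ s > 0, V s = ∫ r in Set.Ioi (0 : ℝ),
      (1 - Real.exp (-(s * γ ^ 2 * r ^ (-γ - 2)))) * r)
    (hQ : ∀ s > 0, Q s = (4 * s * We / (c ^ 2 * (γ + 2))) * (s * γ ^ 2) ^ ((1 - γ) / (γ + 2))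
      * Real.Gamma ((γ - 1) / (γ + 2))) :
    IntegrableOn (fun s : ℝ => Real.exp (-(2 * π * lam * V s)) * (2 * π * lam * Q s))
      (Set.Ioi 0) ∧
    (4 / ρ) * ∫ s in Set.Ioi (0 : ℝ), Real.exp (-(2 * π * lam * V s)) * (2 * π * lam * Q s)
      = (16 * We / (ρ * c ^ 2 * γ ^ 4)) * (π * lam) ^ (-((γ + 3) / 2))
          * Real.Gamma (γ / (γ + 2)) ^ (-((γ + 5) / 2))
          * Real.Gamma ((γ - 1) / (γ + 2)) * Real.Gamma ((γ + 5) / 2) := by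
  have hβ : (0:ℝ) < γ + 2 := by linarith
  have hγ0 : (0:ℝ) < γ := by linarith
  have hγ2 : (0:ℝ) < γ ^ 2 := by positivity
  have hpl : (0:ℝ) < π * lam := mul_pos Real.pi_pos hlam
  have hΓ0 : 0 < Real.Gamma (γ / (γ + 2)) := Real.Gamma_pos_of_pos (by positivity)
  have hΓ1 : 0 < Real.Gamma ((γ - 1) / (γ + 2)) :=
    Real.Gamma_pos_of_pos (div_pos (by linarith) hβ)
  set A : ℝ := π * lam * Real.Gamma (γ / (γ + 2)) * (γ ^ 2) ^ ((2:ℝ) / (γ + 2)) with hAdef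
  have hApos : 0 < A := by rw [hAdef]; positivity
  set C : ℝ := 2 * π * lam * (4 * We / (c ^ 2 * (γ + 2))) * (γ ^ 2) ^ ((1 - γ) / (γ + 2))
    * Real.Gamma ((γ - 1) / (γ + 2)) with hCdef
  have heq : ∀ s ∈ Ioi (0:ℝ), Real.exp (-(2 * π * lam * V s)) * (2 * π * lam * Q s)
      = C * (s ^ ((3:ℝ) / (γ + 2)) * Real.exp (-A * s ^ ((2:ℝ) / (γ + 2)))) := by
    intro s hs
    have hspos : (0:ℝ) < s := hs
    have haux : (0:ℝ) < s * γ ^ 2 := by positivity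
    have hVs : V s = (s * γ ^ 2) ^ ((2:ℝ) / (γ + 2)) * Real.Gamma (γ / (γ + 2)) / 2 := by
      rw [hV s hspos, V_value hγ haux]
    have hsplit : (s * γ ^ 2 : ℝ) ^ ((2:ℝ) / (γ + 2))
        = s ^ ((2:ℝ) / (γ + 2)) * (γ ^ 2) ^ ((2:ℝ) / (γ + 2)) :=
      Real.mul_rpow hspos.le (by positivity)
    have hexp : -(2 * π * lam * V s) = -A * s ^ ((2:ℝ) / (γ + 2)) := by
      rw [hVs, hsplit, hAdef]; ring
    have hQ2 : (s * γ ^ 2 : ℝ) ^ ((1 - γ) / (γ + 2))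
        = s ^ ((1 - γ) / (γ + 2)) * (γ ^ 2) ^ ((1 - γ) / (γ + 2)) :=
      Real.mul_rpow hspos.le (by positivity)
    have hs3 : s ^ ((3:ℝ) / (γ + 2)) = s * s ^ ((1 - γ) / (γ + 2)) := by
      rw [show (3:ℝ) / (γ + 2) = 1 + (1 - γ) / (γ + 2) by field_simp; ring,
        Real.rpow_add hspos, Real.rpow_one]
    rw [hexp, hQ s hspos, hQ2, hCdef, hs3]
    ring
  have hp'ne : ((2:ℝ) / (γ + 2)) ≠ 0 := by positivity
  have hf : IntegrableOn (fun u : ℝ => u ^ ((γ + 3) / 2) * Real.exp (-A * u)) (Ioi 0) := by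
    have h := integrableOn_rpow_mul_exp_neg_mul_rpow (s := (γ + 3) / 2) (p := 1) (b := A)
      (by linarith) one_pos hApos
    exact h.congr_fun (fun x hx => by beta_reduce; rw [Real.rpow_one]) measurableSet_Ioi
  have hg : IntegrableOn
      (fun s : ℝ => s ^ ((3:ℝ) / (γ + 2)) * Real.exp (-A * s ^ ((2:ℝ) / (γ + 2)))) (Ioi 0) := by
    have h := (integrableOn_Ioi_comp_rpow_iff'
      (fun u : ℝ => u ^ ((γ + 3) / 2) * Real.exp (-A * u)) hp'ne).mpr hf
    refine h.congr_fun (fun x hx => ?_) measurableSet_Ioi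
    have hxpos : (0:ℝ) < x := hx
    beta_reduce
    rw [smul_eq_mul, ← Real.rpow_mul hxpos.le, ← mul_assoc, ← Real.rpow_add hxpos,
      show (2:ℝ)/(γ+2) - 1 + 2/(γ+2) * ((γ+3)/2) = 3/(γ+2) by field_simp; ring]
  have hInt : IntegrableOn (fun s : ℝ => Real.exp (-(2 * π * lam * V s)) * (2 * π * lam * Q s))
      (Ioi 0) :=
    IntegrableOn.congr_fun (hg.const_mul C) (fun s hs => (heq s hs).symm) measurableSet_Ioi
  refine ⟨hInt, ?_⟩
  have hval : ∫ s in Ioi (0:ℝ), Real.exp (-(2 * π * lam * V s)) * (2 * π * lam * Q s)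
      = C * (A ^ (-((γ + 5) / 2)) * ((γ + 2) / 2) * Real.Gamma ((γ + 5) / 2)) := by
    rw [setIntegral_congr_fun measurableSet_Ioi heq, integral_const_mul,
      integral_rpow_mul_exp_neg_mul_rpow (p := 2/(γ+2)) (q := 3/(γ+2)) (by positivity)
        (by have := div_pos (by norm_num : (0:ℝ) < 3) hβ; linarith) hApos,
      show -((3:ℝ)/(γ+2) + 1) / (2/(γ+2)) = -((γ+5)/2) by field_simp; ring,
      show ((3:ℝ)/(γ+2) + 1) / (2/(γ+2)) = (γ+5)/2 by field_simp; ring,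
      show (1:ℝ) / (2/(γ+2)) = (γ+2)/2 by field_simp]
  have hA5 : A ^ (-((γ + 5) / 2)) = (π * lam) ^ (-((γ + 5) / 2))
      * Real.Gamma (γ / (γ + 2)) ^ (-((γ + 5) / 2)) * (γ ^ 2 : ℝ) ^ (-((γ + 5) / (γ + 2))) := by
    rw [hAdef, Real.mul_rpow (by positivity) (by positivity),
      Real.mul_rpow (by positivity) (by positivity), ← Real.rpow_mul hγ2.le,
      show (2:ℝ)/(γ+2) * (-((γ+5)/2)) = -((γ+5)/(γ+2)) by field_simp]
  have key1 : π * lam * (π * lam) ^ (-((γ + 5) / 2)) = (π * lam) ^ (-((γ + 3) / 2)) := by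
    calc π * lam * (π * lam) ^ (-((γ + 5) / 2))
        = (π * lam) ^ (1:ℝ) * (π * lam) ^ (-((γ + 5) / 2)) := by rw [Real.rpow_one]
      _ = (π * lam) ^ (1 + -((γ + 5) / 2)) := (Real.rpow_add hpl _ _).symm
      _ = (π * lam) ^ (-((γ + 3) / 2)) := by congr 1; ring
  have key2 : (γ ^ 2 : ℝ) ^ ((1 - γ) / (γ + 2)) * (γ ^ 2 : ℝ) ^ (-((γ + 5) / (γ + 2)))
      = (γ ^ 4)⁻¹ := by
    rw [← Real.rpow_add hγ2,
      show (1 - γ) / (γ + 2) + -((γ + 5) / (γ + 2)) = -2 by field_simp; ring,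
      show (-2 : ℝ) = -((2:ℕ):ℝ) by norm_num, Real.rpow_neg hγ2.le, Real.rpow_natCast,
      ← pow_mul]
  rw [hval, hA5, hCdef]
  calc 4 / ρ * (2 * π * lam * (4 * We / (c ^ 2 * (γ + 2))) * (γ ^ 2) ^ ((1 - γ) / (γ + 2))
        * Real.Gamma ((γ - 1) / (γ + 2))
        * ((π * lam) ^ (-((γ + 5) / 2)) * Real.Gamma (γ / (γ + 2)) ^ (-((γ + 5) / 2))
          * (γ ^ 2 : ℝ) ^ (-((γ + 5) / (γ + 2))) * ((γ + 2) / 2) * Real.Gamma ((γ + 5) / 2)))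
      = 16 * We / (ρ * c ^ 2) * (π * lam * (π * lam) ^ (-((γ + 5) / 2)))
        * Real.Gamma (γ / (γ + 2)) ^ (-((γ + 5) / 2))
        * ((γ ^ 2 : ℝ) ^ ((1 - γ) / (γ + 2)) * (γ ^ 2 : ℝ) ^ (-((γ + 5) / (γ + 2))))
        * Real.Gamma ((γ - 1) / (γ + 2)) * Real.Gamma ((γ + 5) / 2) := by
        field_simp
        ring
    _ = (16 * We / (ρ * c ^ 2 * γ ^ 4)) * (π * lam) ^ (-((γ + 3) / 2))
        * Real.Gamma (γ / (γ + 2)) ^ (-((γ + 5) / 2))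
        * Real.Gamma ((γ - 1) / (γ + 2)) * Real.Gamma ((γ + 5) / 2) := by
        rw [key1, key2]
        field_simp
end

section
/- One has CRB_LB < CRB_LB,N; that is, the narrowband closed form strictly upper-bounds CRB_LB for every effective bandwidth W_e > 0. -/
open MeasureTheory Real

section CRBAux

open Set Filter Topology

lemma one_sub_exp_neg_nonneg' {v : ℝ} (hv : 0 ≤ v) : 0 ≤ 1 - Real.exp (-v) := by
  have : Real.exp (-v) ≤ Real.exp 0 := Real.exp_le_exp.mpr (by linarith)
  simp only [Real.exp_zero] at this; linarith

lemma one_sub_exp_neg_le' {v : ℝ} : 1 - Real.exp (-v) ≤ v := by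
  have := Real.add_one_le_exp (-v); linarith

lemma one_sub_exp_neg_le_one' {v : ℝ} : 1 - Real.exp (-v) ≤ 1 := by
  have := Real.exp_pos (-v); linarith

lemma crb_aux_int_phi {a : ℝ} (h0 : 0 < a) (h1 : a < 1) :
    IntegrableOn (fun v => (1 - Real.exp (-v)) * v ^ (-a-1)) (Set.Ioi (0:ℝ)) := by
  have hcont : ContinuousOn (fun v : ℝ => (1 - Real.exp (-v)) * v ^ (-a-1)) (Set.Ioi 0) := by
    intro v hv
    exact (((continuous_const.sub (Real.continuous_exp.comp continuous_neg)).continuousAt).mul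
      (Real.continuousAt_rpow_const v _ (Or.inl (ne_of_gt hv)))).continuousWithinAt
  rw [← Set.Ioc_union_Ioi_eq_Ioi (zero_le_one)]
  apply IntegrableOn.union
  · refine Integrable.mono' (g := fun v => v ^ (-a))
      ((intervalIntegral.intervalIntegrable_rpow' (by linarith : (-1:ℝ) < -a)).1)
      ((hcont.mono Set.Ioc_subset_Ioi_self).aestronglyMeasurable measurableSet_Ioc) ?_
    rw [ae_restrict_iff' measurableSet_Ioc]
    refine ae_of_all _ fun v hv => ?_
    have hv0 : 0 < v := hv.1
    rw [Real.norm_eq_abs, abs_mul, abs_of_nonneg (one_sub_exp_neg_nonneg' hv0.le),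
      abs_of_nonneg (Real.rpow_nonneg hv0.le _)]
    calc (1 - Real.exp (-v)) * v ^ (-a-1) ≤ v * v ^ (-a-1) :=
          mul_le_mul_of_nonneg_right one_sub_exp_neg_le' (Real.rpow_nonneg hv0.le _)
      _ = v ^ (-a) := by
          rw [eq_comm]; nth_rewrite 2 [← Real.rpow_one v]
          rw [← Real.rpow_add hv0]; norm_num
  · refine Integrable.mono' (g := fun v => v ^ (-a-1))
      (integrableOn_Ioi_rpow_of_lt (by linarith) one_pos)
      ((hcont.mono (Set.Ioi_subset_Ioi zero_le_one)).aestronglyMeasurable measurableSet_Ioi) ?_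
    rw [ae_restrict_iff' measurableSet_Ioi]
    refine ae_of_all _ fun v hv => ?_
    have hv0 : (0:ℝ) < v := lt_trans one_pos hv
    rw [Real.norm_eq_abs, abs_mul, abs_of_nonneg (one_sub_exp_neg_nonneg' hv0.le),
      abs_of_nonneg (Real.rpow_nonneg hv0.le _)]
    exact mul_le_of_le_one_left (Real.rpow_nonneg hv0.le _) one_sub_exp_neg_le_one'

lemma crb_aux_J {a : ℝ} (h0 : 0 < a) (h1 : a < 1) :
    ∫ v in Set.Ioi (0:ℝ), (1 - Real.exp (-v)) * v ^ (-a-1) = Real.Gamma (1-a) / a := by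
  set F : ℝ → ℝ := fun v => -(1/a) * ((1 - Real.exp (-v)) * v ^ (-a)) with hF
  set F' : ℝ → ℝ := fun v =>
    (1 - Real.exp (-v)) * v ^ (-a-1) - (1/a) * (Real.exp (-v) * v ^ (-a)) with hF'
  have hψ : IntegrableOn (fun v => Real.exp (-v) * v ^ (-a)) (Set.Ioi (0:ℝ)) := by
    have := Real.GammaIntegral_convergent (s := 1-a) (by linarith)
    simpa using this.congr_fun (fun v hv => by norm_num) measurableSet_Ioi
  have hφ := crb_aux_int_phi h0 h1
  have hF'int : IntegrableOn F' (Set.Ioi (0:ℝ)) := hφ.sub (hψ.const_mul (1/a))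
  have hF0 : F 0 = 0 := by simp [hF]
  have hcont : ContinuousWithinAt F (Set.Ici 0) 0 := by
    rw [ContinuousWithinAt, hF0]
    apply squeeze_zero_norm' (a := fun v => (1/a) * v ^ (1-a))
    · filter_upwards [self_mem_nhdsWithin] with v (hv : v ∈ Set.Ici (0:ℝ))
      rcases eq_or_lt_of_le (Set.mem_Ici.mp hv) with h | h
      · simp [hF, ← h, Real.zero_rpow (by linarith : (1:ℝ)-a ≠ 0),
          Real.zero_rpow (by linarith : -a ≠ 0)]
      · have : ‖F v‖ = (1/a) * ((1 - Real.exp (-v)) * v ^ (-a)) := by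
          show ‖-(1/a) * ((1 - Real.exp (-v)) * v ^ (-a))‖ = _
          rw [Real.norm_eq_abs, abs_mul, abs_neg, abs_mul,
            abs_of_nonneg (one_sub_exp_neg_nonneg' h.le),
            abs_of_nonneg (Real.rpow_nonneg h.le _), abs_of_nonneg (by positivity : (0:ℝ) ≤ 1/a)]
        rw [this]
        have h2 : (1 - Real.exp (-v)) * v ^ (-a) ≤ v * v ^ (-a) :=
          mul_le_mul_of_nonneg_right one_sub_exp_neg_le' (Real.rpow_nonneg h.le _)
        have h3 : v * v ^ (-a) = v ^ (1-a) := by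
          rw [eq_comm]; nth_rewrite 2 [← Real.rpow_one v]
          rw [← Real.rpow_add h]; congr 1
        rw [← h3]
        exact mul_le_mul_of_nonneg_left h2 (by positivity)
    · have hc : ContinuousAt (fun v : ℝ => v ^ (1-a)) 0 :=
        Real.continuousAt_rpow_const 0 _ (Or.inr (by linarith))
      have : Tendsto (fun v : ℝ => (1/a) * v ^ (1-a)) (𝓝[Set.Ici 0] 0)
          (𝓝 ((1/a) * 0 ^ ((1:ℝ)-a))) :=
        ((hc.tendsto.mono_left (nhdsWithin_le_nhds (s := Set.Ici 0)))).const_mul (1/a)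
      simpa [Real.zero_rpow (by linarith : (1:ℝ)-a ≠ 0)] using this
  have hderiv : ∀ v ∈ Set.Ioi (0:ℝ), HasDerivAt F (F' v) v := by
    intro v hv
    have hv0 : (0:ℝ) < v := hv
    have h1' : HasDerivAt (fun v : ℝ => 1 - Real.exp (-v)) (Real.exp (-v)) v := by
      have := ((Real.hasDerivAt_exp (-v)).comp v (hasDerivAt_neg v)).const_sub 1
      simpa using this
    have h2' : HasDerivAt (fun v : ℝ => v ^ (-a)) (-a * v ^ (-a-1)) v :=
      Real.hasDerivAt_rpow_const (Or.inl hv0.ne')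
    have := (h1'.mul h2').const_mul (-(1/a))
    refine this.congr_deriv ?_
    rw [hF']
    field_simp
    ring
  have hlim : Tendsto F atTop (𝓝 0) := by
    have h1' : Tendsto (fun v : ℝ => 1 - Real.exp (-v)) atTop (𝓝 1) := by
      simpa using tendsto_const_nhds.sub (Real.tendsto_exp_neg_atTop_nhds_zero)
    have := (h1'.mul (tendsto_rpow_neg_atTop h0)).const_mul (-(1/a))
    simpa [hF] using this
  have key := integral_Ioi_of_hasDerivAt_of_tendsto hcont hderiv hF'int hlim
  rw [hF0, sub_zero] at key
  have hsplit : ∫ v in Set.Ioi (0:ℝ), F' v =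
      (∫ v in Set.Ioi (0:ℝ), (1 - Real.exp (-v)) * v ^ (-a-1))
        - (1/a) * ∫ v in Set.Ioi (0:ℝ), Real.exp (-v) * v ^ (-a) := by
    rw [integral_sub hφ (hψ.const_mul (1/a)), integral_const_mul]
  have hGamma : ∫ v in Set.Ioi (0:ℝ), Real.exp (-v) * v ^ (-a) = Real.Gamma (1-a) := by
    rw [Real.Gamma_eq_integral (by linarith : (0:ℝ) < 1-a)]
    exact setIntegral_congr_fun measurableSet_Ioi fun v hv => by norm_num
  rw [hsplit, hGamma] at key
  have : (∫ v in Set.Ioi (0:ℝ), (1 - Real.exp (-v)) * v ^ (-a-1))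
      = (1/a) * Real.Gamma (1-a) := by linarith
  rw [this]; ring

lemma crb_integrable_shape {γ A B s : ℝ} (hγ : 2 < γ) (hA : 0 ≤ A) (hB : 0 ≤ B) (hs : 0 ≤ s) :
    IntegrableOn
      (fun r => (1 - Real.exp (-(s * (A * r ^ (-γ-2) + B * r ^ (-γ))))) * r)
      (Set.Ioi (0:ℝ)) := by
  have hcont : ContinuousOn
      (fun r : ℝ => (1 - Real.exp (-(s * (A * r ^ (-γ-2) + B * r ^ (-γ))))) * r)
      (Set.Ioi 0) := by
    intro r hr
    have c1 : ContinuousAt (fun r : ℝ => r ^ (-γ-2)) r :=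
      Real.continuousAt_rpow_const r _ (Or.inl (ne_of_gt hr))
    have c2 : ContinuousAt (fun r : ℝ => r ^ (-γ)) r :=
      Real.continuousAt_rpow_const r _ (Or.inl (ne_of_gt hr))
    have cg : ContinuousAt (fun r : ℝ => -(s * (A * r ^ (-γ-2) + B * r ^ (-γ)))) r :=
      (((c1.const_mul A).add (c2.const_mul B)).const_mul s).neg
    exact ((continuousAt_const.sub (Real.continuous_exp.continuousAt.comp cg)).mul
      continuousAt_id).continuousWithinAt
  have harg : ∀ r : ℝ, 0 < r → 0 ≤ s * (A * r ^ (-γ-2) + B * r ^ (-γ)) := by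
    intro r hr
    have := Real.rpow_nonneg hr.le (-γ-2)
    have := Real.rpow_nonneg hr.le (-γ)
    positivity
  rw [← Set.Ioc_union_Ioi_eq_Ioi (zero_le_one)]
  apply IntegrableOn.union
  · refine Integrable.mono' (g := fun r => r)
      ((intervalIntegral.intervalIntegrable_rpow' (r := 1) (by norm_num)).1.congr_fun
        (fun r hr => by simp [Real.rpow_one]) measurableSet_Ioc)
      ((hcont.mono Set.Ioc_subset_Ioi_self).aestronglyMeasurable measurableSet_Ioc) ?_
    rw [ae_restrict_iff' measurableSet_Ioc]
    refine ae_of_all _ fun r hr => ?_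
    have hr0 : 0 < r := hr.1
    rw [Real.norm_eq_abs, abs_mul, abs_of_nonneg (one_sub_exp_neg_nonneg' (harg r hr0)),
      abs_of_nonneg hr0.le]
    exact mul_le_of_le_one_left hr0.le one_sub_exp_neg_le_one'
  · refine Integrable.mono' (g := fun r => s * A * r ^ (-γ-1) + s * B * r ^ (-γ+1))
      (((integrableOn_Ioi_rpow_of_lt (by linarith : -γ-1 < -1) one_pos).const_mul
          (s * A)).add
        ((integrableOn_Ioi_rpow_of_lt (by linarith : -γ+1 < -1) one_pos).const_mul (s * B)))
      ((hcont.mono (Set.Ioi_subset_Ioi zero_le_one)).aestronglyMeasurable measurableSet_Ioi) ?_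
    rw [ae_restrict_iff' measurableSet_Ioi]
    refine ae_of_all _ fun r hr => ?_
    have hr0 : (0:ℝ) < r := lt_trans one_pos hr
    rw [Real.norm_eq_abs, abs_mul, abs_of_nonneg (one_sub_exp_neg_nonneg' (harg r hr0)),
      abs_of_nonneg hr0.le]
    calc (1 - Real.exp (-(s * (A * r ^ (-γ-2) + B * r ^ (-γ))))) * r
        ≤ (s * (A * r ^ (-γ-2) + B * r ^ (-γ))) * r :=
          mul_le_mul_of_nonneg_right one_sub_exp_neg_le' hr0.le
      _ = s * A * (r ^ (-γ-2) * r) + s * B * (r ^ (-γ) * r) := by ring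
      _ = s * A * r ^ (-γ-1) + s * B * r ^ (-γ+1) := by
          rw [show r ^ (-γ-2) * r = r ^ (-γ-1) by
              nth_rewrite 2 [← Real.rpow_one r]
              rw [← Real.rpow_add hr0]; congr 1; ring,
            show r ^ (-γ) * r = r ^ (-γ+1) by
              nth_rewrite 2 [← Real.rpow_one r]
              rw [← Real.rpow_add hr0]]

lemma crb_inner_narrow {γ : ℝ} (hγ : 2 < γ) {t : ℝ} (ht : 0 < t) :
    ∫ r in Set.Ioi (0:ℝ), (1 - Real.exp (-(t * r ^ (-γ-2)))) * r
      = Real.Gamma (γ/(γ+2)) / 2 * t ^ (2/(γ+2)) := by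
  set p : ℝ := γ + 2 with hp
  have hp0 : 0 < p := by simp [hp]; linarith
  set a : ℝ := 2 / p with ha
  have ha0 : 0 < a := by positivity
  have ha1 : a < 1 := by rw [ha, div_lt_one hp0]; linarith
  have hpa : p * a = 2 := by rw [ha]; field_simp
  have sub1 := integral_comp_rpow_Ioi
    (fun u => (1/p) * ((1 - Real.exp (-(t*u))) * u ^ (-a-1))) (p := -p) (by linarith)
  have e1 : ∀ x ∈ Set.Ioi (0:ℝ),
      (|(-p)| * x ^ (-p - 1)) • ((1/p) * ((1 - Real.exp (-(t * x ^ (-p)))) * (x ^ (-p)) ^ (-a-1)))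
        = (1 - Real.exp (-(t * x ^ (-γ-2)))) * x := by
    intro x hx
    have hx0 : (0:ℝ) < x := hx
    have h1 : (x ^ (-p)) ^ (-a-1) = x ^ (p + 2) := by
      rw [← Real.rpow_mul hx0.le]
      congr 1
      have : -p * (-a - 1) = p * a + p := by ring
      rw [this, hpa]; ring
    have hgne : -γ-2 = -p := by rw [hp]; ring
    have h2 : x ^ (-p-1) * x ^ (p+2) = x := by
      rw [← Real.rpow_add hx0, show -p-1+(p+2) = (1:ℝ) by ring, Real.rpow_one]
    rw [h1, abs_of_nonpos (by linarith : -p ≤ 0), smul_eq_mul, hgne]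
    calc -(-p) * x ^ (-p-1) * ((1/p) * ((1 - Real.exp (-(t * x ^ (-p)))) * x ^ (p+2)))
        = (1 - Real.exp (-(t * x ^ (-p)))) * (x ^ (-p-1) * x ^ (p+2)) * (p * (1/p)) := by
          ring
      _ = (1 - Real.exp (-(t * x ^ (-p)))) * x := by
          rw [h2, mul_one_div, div_self hp0.ne', mul_one]
  rw [setIntegral_congr_fun measurableSet_Ioi e1] at sub1
  rw [sub1, integral_const_mul]
  have e2 : ∀ u ∈ Set.Ioi (0:ℝ),
      (1 - Real.exp (-(t*u))) * u ^ (-a-1)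
        = t ^ (a+1) * ((1 - Real.exp (-(t*u))) * (t*u) ^ (-a-1)) := by
    intro u hu
    have hu0 : (0:ℝ) < u := hu
    rw [Real.mul_rpow ht.le hu0.le]
    rw [show t ^ (a+1) * ((1 - Real.exp (-(t*u))) * (t ^ (-a-1) * u ^ (-a-1)))
        = (t ^ (a+1) * t ^ (-a-1)) * ((1 - Real.exp (-(t*u))) * u ^ (-a-1)) by ring,
      ← Real.rpow_add ht, show a+1+(-a-1) = (0:ℝ) by ring, Real.rpow_zero, one_mul]
  rw [setIntegral_congr_fun measurableSet_Ioi e2, integral_const_mul]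
  have e3 := integral_comp_mul_left_Ioi (fun v => (1 - Real.exp (-v)) * v ^ (-a-1)) 0 ht
  simp only [mul_zero, smul_eq_mul] at e3
  rw [show (fun u => (1 - Real.exp (-(t*u))) * (t*u) ^ (-a-1))
      = (fun u => (fun v => (1 - Real.exp (-v)) * v ^ (-a-1)) (t*u)) by rfl, e3,
    crb_aux_J ha0 ha1]
  have h1a : 1 - a = γ / p := by
    rw [ha, hp]; field_simp; ring
  rw [h1a]
  rw [show t ^ (a+1) * (t⁻¹ * (Real.Gamma (γ/p) / a)) = (t ^ (a+1) * t⁻¹) * Real.Gamma (γ/p) / a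
      by ring, ← Real.rpow_neg_one t, ← Real.rpow_add ht, show a+1+(-1) = a by ring]
  rw [ha, hp]
  have hγ2 : γ + 2 ≠ 0 := by linarith
  field_simp

lemma crb_Gint {a K : ℝ} (h0 : 0 < a) (h1 : a < 1) (hK : 0 < K) :
    IntegrableOn (fun s => Real.exp (-(K * s ^ a))) (Set.Ioi (0:ℝ)) := by
  have hf : IntegrableOn (fun u : ℝ => u ^ ((1-a)/a) * Real.exp (-K * u)) (Set.Ioi (0:ℝ)) := by
    have := integrableOn_rpow_mul_exp_neg_mul_rpow
      (s := (1-a)/a) (p := 1) (b := K) (lt_trans (by norm_num) (div_pos (by linarith) h0))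
      one_pos hK
    exact this.congr_fun (fun u hu => by simp only [Real.rpow_one]) measurableSet_Ioi
  have key := (integrableOn_Ioi_comp_rpow_iff'
    (fun u : ℝ => u ^ ((1-a)/a) * Real.exp (-K * u)) (p := a) h0.ne').mpr hf
  refine key.congr_fun (fun x hx => ?_) measurableSet_Ioi
  have hx0 : (0:ℝ) < x := hx
  dsimp only
  rw [smul_eq_mul, ← Real.rpow_mul hx0.le, show a * ((1-a)/a) = 1 - a by field_simp,
    neg_mul, show x ^ (a-1) * (x ^ (1-a) * Real.exp (-(K * x ^ a)))
      = (x ^ (a-1) * x ^ (1-a)) * Real.exp (-(K * x ^ a)) by ring,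
    ← Real.rpow_add hx0, show a-1+(1-a) = (0:ℝ) by ring, Real.rpow_zero, one_mul]

end CRBAux

/-- `CRB_LB < CRB_LB,N`: the narrowband closed form strictly upper-bounds `CRB_LB`
for every effective bandwidth `W_e > 0`. -/
theorem CRB_LB_lt_narrowband (γ We c lam ρ : ℝ)
    (hγ : 2 < γ) (hWe : 0 < We) (hc : 0 < c) (hlam : 0 < lam) (hρ : 0 < ρ)
    (g Z : ℝ → ℝ)
    (hg : ∀ r > 0, g r = r ^ (-γ - 2) * (γ ^ 2 + 4 * We * r ^ 2 / c ^ 2))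
    (hZ : ∀ s > 0, Z s = ∫ r in Set.Ioi (0 : ℝ), (1 - Real.exp (-s * g r)) * r)
    (CRB_LB CRB_LBN : ℝ)
    (hLB : CRB_LB = (4 / ρ) * ∫ s in Set.Ioi (0 : ℝ), Real.exp (-(2 * π * lam * Z s)))
    (hLBN : CRB_LBN = (4 / (ρ * γ ^ 2))
      * (π * lam * Real.Gamma (γ / (γ + 2))) ^ (-(γ / 2 + 1)) * Real.Gamma (2 + γ / 2)) :
    CRB_LB < CRB_LBN := by
  have hγ0 : (0:ℝ) < γ := by linarith
  have hA : (0:ℝ) < γ ^ 2 := by positivity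
  set B : ℝ := 4 * We / c ^ 2 with hBdef
  have hB : 0 < B := by positivity
  set a : ℝ := 2 / (γ + 2) with ha
  have hγ2 : (0:ℝ) < γ + 2 := by linarith
  have ha0 : 0 < a := by positivity
  have ha1 : a < 1 := by rw [ha, div_lt_one hγ2]; linarith
  set Γ₁ : ℝ := Real.Gamma (γ / (γ + 2)) with hΓ₁def
  have hΓ₁ : 0 < Γ₁ := Real.Gamma_pos_of_pos (by positivity)
  have hπ : (0:ℝ) < π := Real.pi_pos
  set K : ℝ := π * lam * Γ₁ * (γ ^ 2) ^ a with hKdef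
  have hK : 0 < K := by
    have := Real.rpow_pos_of_pos hA a
    positivity
  set W : ℝ → ℝ → ℝ :=
    fun s r => (1 - Real.exp (-(s * (γ ^ 2 * r ^ (-γ-2) + B * r ^ (-γ))))) * r with hW
  set Nb : ℝ → ℝ → ℝ :=
    fun s r => (1 - Real.exp (-((s * γ ^ 2) * r ^ (-γ-2)))) * r with hNb
  -- Z in explicit form
  have hZeq : ∀ s : ℝ, 0 < s → Z s = ∫ r in Set.Ioi (0:ℝ), W s r := by
    intro s hs
    rw [hZ s hs]
    refine setIntegral_congr_fun measurableSet_Ioi fun r hr => ?_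
    have hr0 : (0:ℝ) < r := hr
    have hr2 : r ^ (-γ-2) * r ^ (2:ℕ) = r ^ (-γ) := by
      rw [← Real.rpow_natCast r 2, ← Real.rpow_add hr0]; norm_num
    have hgr : g r = γ ^ 2 * r ^ (-γ-2) + B * r ^ (-γ) := by
      rw [hg r hr0, ← hr2, hBdef]
      have hc2 : (c:ℝ) ^ 2 ≠ 0 := by positivity
      field_simp
    rw [hW, hgr]
    congr 2
    ring
  -- integrability of the inner integrands
  have hWint : ∀ s : ℝ, 0 < s → IntegrableOn (W s) (Set.Ioi (0:ℝ)) := fun s hs =>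
    crb_integrable_shape hγ (le_of_lt hA) hB.le hs.le
  have hNbint : ∀ s : ℝ, 0 < s → IntegrableOn (Nb s) (Set.Ioi (0:ℝ)) := by
    intro s hs
    have := crb_integrable_shape (A := s * γ ^ 2) (B := 0) (s := 1) hγ
      (by positivity) le_rfl zero_le_one
    exact this.congr_fun (fun r hr => by simp [hNb]) measurableSet_Ioi
  -- strict lower bound for Z
  have hZgt : ∀ s : ℝ, 0 < s → Γ₁ / 2 * (s * γ ^ 2) ^ a < Z s := by
    intro s hs
    have hsA : 0 < s * γ ^ 2 := by positivity
    have hNbval : ∫ r in Set.Ioi (0:ℝ), Nb s r = Γ₁ / 2 * (s * γ ^ 2) ^ a := by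
      have h := crb_inner_narrow hγ hsA
      rw [← hΓ₁def, ← ha] at h
      exact h
    have hdiffpos : 0 < ∫ r in Set.Ioi (0:ℝ), (W s r - Nb s r) := by
      have hptws : ∀ r ∈ Set.Ioi (0:ℝ), 0 < W s r - Nb s r := by
        intro r hr
        have hr0 : (0:ℝ) < r := hr
        have h1 : (s * γ ^ 2) * r ^ (-γ-2) < s * (γ ^ 2 * r ^ (-γ-2) + B * r ^ (-γ)) := by
          have hBpos : 0 < B * r ^ (-γ) := by
            have := Real.rpow_pos_of_pos hr0 (-γ); positivity
          nlinarith
        have h2 : Real.exp (-(s * (γ ^ 2 * r ^ (-γ-2) + B * r ^ (-γ))))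
            < Real.exp (-((s * γ ^ 2) * r ^ (-γ-2))) := Real.exp_lt_exp.mpr (by linarith)
        have h3 := mul_pos (sub_pos.mpr h2) hr0
        simp only [hW, hNb]
        nlinarith [h3]
      rw [setIntegral_pos_iff_support_of_nonneg_ae]
      · refine lt_of_lt_of_le ?_ (measure_mono (Set.subset_inter
          (fun r hr => ne_of_gt (hptws r hr)) Set.Subset.rfl))
        simp [Real.volume_Ioi]
      · exact Filter.eventually_of_mem (self_mem_ae_restrict measurableSet_Ioi)
          (fun r hr => le_of_lt (hptws r hr))
      · exact (hWint s hs).sub (hNbint s hs)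
    have := integral_sub (hWint s hs) (hNbint s hs)
    rw [hZeq s hs]
    have heq : ∫ r in Set.Ioi (0:ℝ), (W s r - Nb s r)
        = (∫ r in Set.Ioi (0:ℝ), W s r) - ∫ r in Set.Ioi (0:ℝ), Nb s r := this
    rw [heq, hNbval] at hdiffpos
    linarith
  -- comparison of outer integrands
  set F : ℝ → ℝ := fun s => Real.exp (-(2 * π * lam * Z s)) with hF
  set G : ℝ → ℝ := fun s => Real.exp (-(K * s ^ a)) with hG
  have hlt : ∀ s ∈ Set.Ioi (0:ℝ), F s < G s := by
    intro s hs
    have hs0 : (0:ℝ) < s := hs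
    rw [hF, hG]
    apply Real.exp_lt_exp.mpr
    rw [neg_lt_neg_iff]
    have hKs : K * s ^ a = 2 * π * lam * (Γ₁ / 2 * (s * γ ^ 2) ^ a) := by
      rw [hKdef, Real.mul_rpow hs0.le (le_of_lt hA)]
      ring
    rw [hKs]
    exact mul_lt_mul_of_pos_left (hZgt s hs0) (by positivity)
  -- antitonicity of F gives measurability
  have hanti : AntitoneOn F (Set.Ioi (0:ℝ)) := by
    intro s1 h1 s2 h2 h12
    rw [hF]
    apply Real.exp_le_exp.mpr
    rw [neg_le_neg_iff]
    have hZmono : Z s1 ≤ Z s2 := by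
      rw [hZeq s1 h1, hZeq s2 h2]
      refine setIntegral_mono_on (hWint s1 h1) (hWint s2 h2) measurableSet_Ioi fun r hr => ?_
      have hr0 : (0:ℝ) < r := hr
      have hX : 0 ≤ γ ^ 2 * r ^ (-γ-2) + B * r ^ (-γ) := by
        have := Real.rpow_nonneg hr0.le (-γ-2)
        have := Real.rpow_nonneg hr0.le (-γ)
        positivity
      have hexps : Real.exp (-(s2 * (γ ^ 2 * r ^ (-γ-2) + B * r ^ (-γ))))
          ≤ Real.exp (-(s1 * (γ ^ 2 * r ^ (-γ-2) + B * r ^ (-γ)))) :=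
        Real.exp_le_exp.mpr (by nlinarith)
      simp only [hW]
      exact mul_le_mul_of_nonneg_right (by linarith) hr0.le
    exact mul_le_mul_of_nonneg_left hZmono (by positivity)
  have hGint : IntegrableOn G (Set.Ioi (0:ℝ)) := crb_Gint ha0 ha1 hK
  have hFmeas : AEStronglyMeasurable F (volume.restrict (Set.Ioi (0:ℝ))) :=
    (aemeasurable_restrict_of_antitoneOn measurableSet_Ioi hanti).aestronglyMeasurable
  have hFint : IntegrableOn F (Set.Ioi (0:ℝ)) := by
    refine Integrable.mono' hGint hFmeas ?_
    rw [ae_restrict_iff' measurableSet_Ioi]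
    refine ae_of_all _ fun s hs => ?_
    rw [Real.norm_eq_abs, abs_of_pos (Real.exp_pos _)]
    exact le_of_lt (hlt s hs)
  -- strict inequality of the outer integrals
  have houter : (∫ s in Set.Ioi (0:ℝ), F s) < ∫ s in Set.Ioi (0:ℝ), G s := by
    have hdiffpos : 0 < ∫ s in Set.Ioi (0:ℝ), (G s - F s) := by
      rw [setIntegral_pos_iff_support_of_nonneg_ae]
      · refine lt_of_lt_of_le ?_ (measure_mono (Set.subset_inter
          (fun s hs => ne_of_gt (sub_pos.mpr (hlt s hs))) Set.Subset.rfl))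
        simp [Real.volume_Ioi]
      · exact Filter.eventually_of_mem (self_mem_ae_restrict measurableSet_Ioi)
          (fun s hs => le_of_lt (sub_pos.mpr (hlt s hs)))
      · exact hGint.sub hFint
    rw [integral_sub hGint hFint] at hdiffpos
    linarith
  -- value of ∫ G
  have hGval : (∫ s in Set.Ioi (0:ℝ), G s) = K ^ (-1/a) * Real.Gamma (1/a + 1) := by
    rw [hG, ← integral_exp_neg_mul_rpow ha0 hK]
    exact setIntegral_congr_fun measurableSet_Ioi fun s hs => by rw [neg_mul]
  -- final algebra
  have hCRBN : CRB_LBN = (4 / ρ) * (K ^ (-1/a) * Real.Gamma (1/a + 1)) := by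
    rw [hLBN]
    have h1 : (1:ℝ)/a + 1 = 2 + γ/2 := by rw [ha]; field_simp; ring
    have hexp : (-1:ℝ)/a = -(γ/2+1) := by
      rw [ha]; field_simp
    have h2 : K ^ (-1/a) = (π * lam * Γ₁) ^ (-(γ/2+1)) * (γ ^ 2)⁻¹ := by
      rw [hKdef, Real.mul_rpow (by positivity) (Real.rpow_nonneg (le_of_lt hA) a),
        ← Real.rpow_mul (sq_nonneg γ), show a * (-1/a) = (-1:ℝ) by field_simp,
        Real.rpow_neg_one, hexp]
    rw [h1, h2]
    have hγ2ne : (γ:ℝ) ^ 2 ≠ 0 := by positivity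
    field_simp
  rw [hLB, hCRBN, ← hGval]
  exact mul_lt_mul_of_pos_left houter (by positivity)
end

section
/- Regarding CRB_LB as a function of the sensor density λ (with γ, W_e, c, ρ fixed), CRB_LB is strictly decreasing in λ: if 0 < λ₁ < λ₂ then CRB_LB(λ₂) < CRB_LB(λ₁). -/
open MeasureTheory Real

section Aux

lemma integrable_exp_neg_mul_rpow' {b p : ℝ} (hb : 0 < b) (hp : 0 < p) :
    MeasureTheory.IntegrableOn (fun s : ℝ => Real.exp (-(b * s ^ p))) (Set.Ioi 0) := by
  have hcont : Continuous (fun s : ℝ => Real.exp (-(b * s ^ p))) :=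
    Real.continuous_exp.comp ((continuous_const.mul (Real.continuous_rpow_const hp.le)).neg)
  have hsplit : Set.Ioc (0:ℝ) 1 ∪ Set.Ioi (1:ℝ) = Set.Ioi 0 := Set.Ioc_union_Ioi_eq_Ioi zero_le_one
  rw [← hsplit]
  apply MeasureTheory.IntegrableOn.union
  · refine MeasureTheory.Integrable.mono' (MeasureTheory.integrable_const 1)
      hcont.aestronglyMeasurable.restrict ?_
    filter_upwards [MeasureTheory.ae_restrict_mem measurableSet_Ioc] with s hs
    rw [Real.norm_eq_abs, abs_of_nonneg (Real.exp_nonneg _)]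
    have : 0 ≤ b * s ^ p := mul_nonneg hb.le (Real.rpow_nonneg hs.1.le p)
    calc Real.exp (-(b * s ^ p)) ≤ Real.exp 0 := Real.exp_le_exp.2 (by linarith)
    _ = 1 := Real.exp_zero
  · set n : ℕ := ⌈2 / p⌉₊ with hn
    have hn2 : 2 / p ≤ (n : ℝ) := Nat.le_ceil _
    have hnp : 2 ≤ (n : ℝ) * p := by
      rw [div_le_iff₀ hp] at hn2; linarith
    have hn0 : 0 < (n : ℝ) := by positivity
    have hq : -((n : ℝ) * p) < -1 := by linarith
    have hint : MeasureTheory.IntegrableOn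
        (fun s : ℝ => ((n : ℝ) / b) ^ n * s ^ (-((n:ℝ) * p))) (Set.Ioi 1) :=
      (integrableOn_Ioi_rpow_of_lt hq one_pos).const_mul _
    refine MeasureTheory.Integrable.mono' hint hcont.aestronglyMeasurable.restrict ?_
    filter_upwards [MeasureTheory.ae_restrict_mem measurableSet_Ioi] with s hs
    have hs0 : (0:ℝ) < s := lt_trans one_pos hs
    have hsp : 0 < s ^ p := Real.rpow_pos_of_pos hs0 p
    set t : ℝ := b * s ^ p with ht
    have ht0 : 0 < t := mul_pos hb hsp
    rw [Real.norm_eq_abs, abs_of_nonneg (Real.exp_nonneg _)]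
    have key : (t / n) ^ n ≤ Real.exp t := by
      have h1 : t / n ≤ Real.exp (t / n) := by
        have := Real.add_one_le_exp (t / n); linarith
      calc (t / n) ^ n ≤ (Real.exp (t / n)) ^ n := pow_le_pow_left₀ (by positivity) h1 n
        _ = Real.exp t := by
            rw [← Real.exp_nat_mul]; congr 1; field_simp
    have htn : 0 < (t / n) ^ n := by positivity
    have hsn : (s ^ p) ^ n = s ^ (p * (n:ℝ)) := by
      rw [← Real.rpow_natCast (s ^ p) n, ← Real.rpow_mul hs0.le]
    have hspow : s ^ (-((n:ℝ)*p)) = ((s ^ p) ^ n)⁻¹ := by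
      rw [hsn, ← Real.rpow_neg hs0.le]; congr 1; ring
    have h3 : ((n:ℝ)/b)^n * s ^ (-((n:ℝ)*p)) = ((t/n)^n)⁻¹ := by
      rw [hspow, ht]
      have hb0 : (b:ℝ) ≠ 0 := hb.ne'
      have hn0' : ((n:ℝ)) ≠ 0 := hn0.ne'
      have hsp0 : (s ^ p) ≠ 0 := hsp.ne'
      field_simp
      rw [← mul_pow]; congr 1; field_simp
    rw [Real.exp_neg, h3]
    exact inv_anti₀ htn key

lemma integrableOn_F' {γ We c : ℝ} (hγ : 2 < γ) (hWe : 0 < We) (hc : 0 < c)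
    {s : ℝ} (hs : 0 < s) :
    MeasureTheory.IntegrableOn
      (fun r : ℝ => (1 - Real.exp (-s * (r ^ (-γ - 2) * (γ ^ 2 + 4 * We * r ^ 2 / c ^ 2)))) * r)
      (Set.Ioi 0) := by
  set G : ℝ → ℝ := fun r => r ^ (-γ - 2) * (γ ^ 2 + 4 * We * r ^ 2 / c ^ 2) with hG
  have hGpos : ∀ r : ℝ, 0 < r → 0 < G r := by
    intro r hr
    have h1 : 0 < r ^ (-γ - 2) := Real.rpow_pos_of_pos hr _
    have h2 : 0 < γ ^ 2 + 4 * We * r ^ 2 / c ^ 2 := by positivity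
    exact mul_pos h1 h2
  have hcont : ContinuousOn (fun r : ℝ => (1 - Real.exp (-s * G r)) * r) (Set.Ioi 0) := by
    apply ContinuousOn.mul _ continuousOn_id
    apply ContinuousOn.sub continuousOn_const
    apply Real.continuous_exp.comp_continuousOn
    apply ContinuousOn.mul continuousOn_const
    apply ContinuousOn.mul
    · exact ContinuousOn.rpow_const continuousOn_id (fun x hx => Or.inl (ne_of_gt hx))
    · fun_prop
  have hsplit : Set.Ioc (0:ℝ) 1 ∪ Set.Ioi (1:ℝ) = Set.Ioi 0 := Set.Ioc_union_Ioi_eq_Ioi zero_le_one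
  rw [← hsplit]
  apply MeasureTheory.IntegrableOn.union
  · refine MeasureTheory.Integrable.mono' (MeasureTheory.integrable_const 1)
      ((hcont.mono (Set.Ioc_subset_Ioi_self.trans (by simp))).aestronglyMeasurable
        measurableSet_Ioc) ?_
    filter_upwards [MeasureTheory.ae_restrict_mem measurableSet_Ioc] with r hr
    have hr0 : 0 < r := hr.1
    have hexp : Real.exp (-s * G r) ≤ 1 := by
      rw [← Real.exp_zero]
      apply Real.exp_le_exp.2
      have := hGpos r hr0
      nlinarith
    have hexp0 : 0 ≤ Real.exp (-s * G r) := Real.exp_nonneg _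
    rw [Real.norm_eq_abs, abs_of_nonneg (by nlinarith)]
    nlinarith [hr.2]
  · have hmaj : MeasureTheory.IntegrableOn
        (fun r : ℝ => s * γ ^ 2 * r ^ (-γ - 1) + s * 4 * We / c ^ 2 * r ^ (-γ + 1))
        (Set.Ioi 1) := by
      apply MeasureTheory.Integrable.add
      · exact (integrableOn_Ioi_rpow_of_lt (by linarith) one_pos).const_mul _
      · exact (integrableOn_Ioi_rpow_of_lt (by linarith) one_pos).const_mul _
    refine MeasureTheory.Integrable.mono' hmaj
      ((hcont.mono (Set.Ioi_subset_Ioi zero_le_one)).aestronglyMeasurable measurableSet_Ioi) ?_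
    filter_upwards [MeasureTheory.ae_restrict_mem measurableSet_Ioi] with r hr
    have hr0 : (0:ℝ) < r := lt_trans one_pos hr
    have hGr := hGpos r hr0
    have hx : 0 ≤ s * G r := by positivity
    have h1e : 1 - Real.exp (-s * G r) ≤ s * G r := by
      have h := Real.add_one_le_exp (-(s * G r))
      have : 1 - (s * G r) ≤ Real.exp (-s * G r) := by rw [neg_mul]; linarith
      linarith
    have h0e : 0 ≤ 1 - Real.exp (-s * G r) := by
      have : Real.exp (-s * G r) ≤ Real.exp 0 := Real.exp_le_exp.2 (by nlinarith)
      simpa [Real.exp_zero] using this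
    rw [Real.norm_eq_abs, abs_of_nonneg (by nlinarith)]
    have hid : (s * G r) * r = s * γ ^ 2 * r ^ (-γ - 1) + s * 4 * We / c ^ 2 * r ^ (-γ + 1) := by
      have ha : r ^ (-γ - 1) = r ^ (-γ - 2) * r := by
        rw [show -γ - 1 = (-γ - 2) + 1 by ring, Real.rpow_add hr0, Real.rpow_one]
      have hb : r ^ (-γ + 1) = r ^ (-γ - 2) * r ^ 2 * r := by
        rw [show -γ + 1 = ((-γ - 2) + 2) + 1 by ring, Real.rpow_add hr0, Real.rpow_add hr0,
          Real.rpow_one, Real.rpow_two]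
      rw [ha, hb, hG]
      have hc0 : (c:ℝ)^2 ≠ 0 := by positivity
      field_simp
    calc (1 - Real.exp (-s * G r)) * r ≤ (s * G r) * r := by nlinarith
      _ = _ := hid

lemma Z_lower_bound' {γ We c : ℝ} (hγ : 2 < γ) (hWe : 0 < We) (hc : 0 < c)
    {s : ℝ} (hs : 0 < s) :
    (1 - Real.exp (-1)) / 2 * ((γ ^ 2) ^ (2 / (γ + 2)) * s ^ (2 / (γ + 2)))
      ≤ ∫ r in Set.Ioi (0:ℝ),
          (1 - Real.exp (-s * (r ^ (-γ - 2) * (γ ^ 2 + 4 * We * r ^ 2 / c ^ 2)))) * r := by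
  set G : ℝ → ℝ := fun r => r ^ (-γ - 2) * (γ ^ 2 + 4 * We * r ^ 2 / c ^ 2) with hG
  have hγ2 : (0:ℝ) < γ ^ 2 := by positivity
  have hγ2s : (0:ℝ) < γ ^ 2 * s := by positivity
  have hγp2 : (0:ℝ) < γ + 2 := by linarith
  set R : ℝ := (γ ^ 2 * s) ^ ((γ + 2)⁻¹) with hRdef
  have hR : 0 < R := Real.rpow_pos_of_pos hγ2s _
  have hGpos : ∀ r : ℝ, 0 < r → 0 < G r := by
    intro r hr
    have h1 : 0 < r ^ (-γ - 2) := Real.rpow_pos_of_pos hr _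
    have h2 : 0 < γ ^ 2 + 4 * We * r ^ 2 / c ^ 2 := by positivity
    exact mul_pos h1 h2
  have hFnonneg : ∀ r : ℝ, 0 < r → 0 ≤ (1 - Real.exp (-s * G r)) * r := by
    intro r hr
    have h1 : Real.exp (-s * G r) ≤ 1 := by
      rw [← Real.exp_zero]; apply Real.exp_le_exp.2; nlinarith [hGpos r hr]
    nlinarith
  have hRval : R ^ (-γ - 2) = (γ ^ 2 * s)⁻¹ := by
    rw [hRdef, ← Real.rpow_mul hγ2s.le]
    rw [show (γ + 2)⁻¹ * (-γ - 2) = -1 by field_simp; ring]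
    rw [Real.rpow_neg_one]
  have hkey : ∀ r : ℝ, 0 < r → r ≤ R → 1 ≤ s * G r := by
    intro r hr hrR
    have h1 : R ^ (-γ - 2) ≤ r ^ (-γ - 2) :=
      Real.rpow_le_rpow_of_nonpos hr hrR (by linarith)
    have h2 : (γ ^ 2 * s)⁻¹ ≤ r ^ (-γ - 2) := hRval ▸ h1
    have hrp : 0 < r ^ (-γ - 2) := Real.rpow_pos_of_pos hr _
    have h5 : 1 ≤ s * (r ^ (-γ - 2) * γ ^ 2) := by
      calc (1:ℝ) = s * γ ^ 2 * (γ ^ 2 * s)⁻¹ := by field_simp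
        _ ≤ s * γ ^ 2 * r ^ (-γ - 2) := mul_le_mul_of_nonneg_left h2 (by positivity)
        _ = s * (r ^ (-γ - 2) * γ ^ 2) := by ring
    have h6 : s * (r ^ (-γ - 2) * γ ^ 2) ≤ s * G r := by
      apply mul_le_mul_of_nonneg_left _ hs.le
      rw [hG]
      have : 0 ≤ 4 * We * r ^ 2 / c ^ 2 := by positivity
      nlinarith
    linarith
  have hR2 : R ^ 2 = (γ ^ 2) ^ (2 / (γ + 2)) * s ^ (2 / (γ + 2)) := by
    rw [← Real.rpow_natCast R 2, hRdef, ← Real.rpow_mul hγ2s.le]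
    rw [show (γ + 2)⁻¹ * ((2:ℕ):ℝ) = 2 / (γ + 2) by push_cast; ring]
    exact Real.mul_rpow hγ2.le hs.le
  have hstep1 : ∫ r in Set.Ioc (0:ℝ) R, (1 - Real.exp (-1)) * r = (1 - Real.exp (-1)) * (R ^ 2 / 2) := by
    rw [MeasureTheory.integral_const_mul]
    congr 1
    rw [← intervalIntegral.integral_of_le hR.le, integral_id]
    ring
  have hint1 : MeasureTheory.IntegrableOn (fun r : ℝ => (1 - Real.exp (-1)) * r)
      (Set.Ioc (0:ℝ) R) := (continuous_const.mul continuous_id).integrableOn_Ioc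
  have hintF : MeasureTheory.IntegrableOn (fun r : ℝ => (1 - Real.exp (-s * G r)) * r)
      (Set.Ioi 0) := integrableOn_F' hγ hWe hc hs
  have hstep2 : ∫ r in Set.Ioc (0:ℝ) R, (1 - Real.exp (-1)) * r
      ≤ ∫ r in Set.Ioc (0:ℝ) R, (1 - Real.exp (-s * G r)) * r := by
    apply MeasureTheory.setIntegral_mono_on hint1
      (hintF.mono_set Set.Ioc_subset_Ioi_self) measurableSet_Ioc
    intro r hr
    have h1 : Real.exp (-s * G r) ≤ Real.exp (-1) := by
      apply Real.exp_le_exp.2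
      have := hkey r hr.1 hr.2
      linarith
    nlinarith [hr.1.le]
  have hstep3 : ∫ r in Set.Ioc (0:ℝ) R, (1 - Real.exp (-s * G r)) * r
      ≤ ∫ r in Set.Ioi (0:ℝ), (1 - Real.exp (-s * G r)) * r := by
    apply MeasureTheory.setIntegral_mono_set hintF
    · filter_upwards [MeasureTheory.ae_restrict_mem measurableSet_Ioi] with r hr
      exact hFnonneg r hr
    · exact HasSubset.Subset.eventuallyLE Set.Ioc_subset_Ioi_self
  calc (1 - Real.exp (-1)) / 2 * ((γ ^ 2) ^ (2 / (γ + 2)) * s ^ (2 / (γ + 2)))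
      = (1 - Real.exp (-1)) * (R ^ 2 / 2) := by rw [hR2]; ring
    _ = ∫ r in Set.Ioc (0:ℝ) R, (1 - Real.exp (-1)) * r := hstep1.symm
    _ ≤ ∫ r in Set.Ioc (0:ℝ) R, (1 - Real.exp (-s * G r)) * r := hstep2
    _ ≤ _ := hstep3

end Aux

/-- Regarding `CRB_LB` as a function of the sensor density `λ` (with `γ, W_e, c, ρ` fixed),
`CRB_LB` is strictly decreasing: if `0 < λ₁ < λ₂` then `CRB_LB(λ₂) < CRB_LB(λ₁)`. -/
theorem CRB_LB_strictAnti_in_density (γ We c ρ : ℝ)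
    (hγ : 2 < γ) (hWe : 0 < We) (hc : 0 < c) (hρ : 0 < ρ)
    (g Z : ℝ → ℝ) (CRB_LB : ℝ → ℝ)
    (hg : ∀ r > 0, g r = r ^ (-γ - 2) * (γ ^ 2 + 4 * We * r ^ 2 / c ^ 2))
    (hZ : ∀ s > 0, Z s = ∫ r in Set.Ioi (0 : ℝ), (1 - Real.exp (-s * g r)) * r)
    (hLB : ∀ lam > 0, CRB_LB lam
      = (4 / ρ) * ∫ s in Set.Ioi (0 : ℝ), Real.exp (-(2 * π * lam * Z s)))
    (lam₁ lam₂ : ℝ) (h₁ : 0 < lam₁) (h₁₂ : lam₁ < lam₂) :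
    CRB_LB lam₂ < CRB_LB lam₁ := by
  have h₂ : 0 < lam₂ := h₁.trans h₁₂
  have hπ : (0:ℝ) < π := Real.pi_pos
  set G : ℝ → ℝ := fun r => r ^ (-γ - 2) * (γ ^ 2 + 4 * We * r ^ 2 / c ^ 2) with hGdef
  have hGpos : ∀ r : ℝ, 0 < r → 0 < G r := by
    intro r hr
    have h1 : 0 < r ^ (-γ - 2) := Real.rpow_pos_of_pos hr _
    have h2 : 0 < γ ^ 2 + 4 * We * r ^ 2 / c ^ 2 := by positivity
    exact mul_pos h1 h2
  set p : ℝ := 2 / (γ + 2) with hpdef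
  have hp : 0 < p := by
    have : (0:ℝ) < γ + 2 := by linarith
    positivity
  set K : ℝ := (1 - Real.exp (-1)) / 2 * (γ ^ 2) ^ (2 / (γ + 2)) with hKdef
  have hexpneg1 : Real.exp (-1) < 1 := by
    rw [← Real.exp_zero]; exact Real.exp_lt_exp.2 (by norm_num)
  have hK : 0 < K := by
    have h1 : 0 < 1 - Real.exp (-1) := by linarith
    have h2 : (0:ℝ) < (γ ^ 2) ^ (2 / (γ + 2)) :=
      Real.rpow_pos_of_pos (by positivity) _
    positivity
  have hFae : ∀ s : ℝ,
      (fun r => (1 - Real.exp (-s * g r)) * r)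
        =ᵐ[volume.restrict (Set.Ioi 0)] fun r => (1 - Real.exp (-s * G r)) * r := by
    intro s
    filter_upwards [MeasureTheory.ae_restrict_mem measurableSet_Ioi] with r hr
    rw [hg r hr]
  have hZeq : ∀ s > 0, Z s = ∫ r in Set.Ioi (0:ℝ), (1 - Real.exp (-s * G r)) * r := by
    intro s hs
    rw [hZ s hs]
    exact MeasureTheory.integral_congr_ae (hFae s)
  have hZlow : ∀ s > 0, K * s ^ p ≤ Z s := by
    intro s hs
    rw [hZeq s hs]
    have h := Z_lower_bound' hγ hWe hc hs
    calc K * s ^ p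
        = (1 - Real.exp (-1)) / 2 * ((γ ^ 2) ^ (2 / (γ + 2)) * s ^ (2 / (γ + 2))) := by
          rw [hKdef, hpdef]; ring
      _ ≤ _ := h
  have hZpos : ∀ s > 0, 0 < Z s := by
    intro s hs
    have h1 : 0 < K * s ^ p := mul_pos hK (Real.rpow_pos_of_pos hs p)
    linarith [hZlow s hs]
  have hZmono : ∀ s₁ s₂ : ℝ, 0 < s₁ → s₁ ≤ s₂ → Z s₁ ≤ Z s₂ := by
    intro s₁ s₂ hs₁ hs₁₂
    have hs₂ : 0 < s₂ := lt_of_lt_of_le hs₁ hs₁₂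
    rw [hZeq s₁ hs₁, hZeq s₂ hs₂]
    apply MeasureTheory.setIntegral_mono_on (integrableOn_F' hγ hWe hc hs₁)
      (integrableOn_F' hγ hWe hc hs₂) measurableSet_Ioi
    intro r hr
    have hGr := hGpos r hr
    have : Real.exp (-s₂ * G r) ≤ Real.exp (-s₁ * G r) :=
      Real.exp_le_exp.2 (by nlinarith)
    have hr0 : (0:ℝ) ≤ r := (le_of_lt hr)
    nlinarith
  -- measurability
  have hmeas : ∀ lam : ℝ, 0 < lam →
      MeasureTheory.AEStronglyMeasurable (fun s => Real.exp (-(2 * π * lam * Z s)))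
        (volume.restrict (Set.Ioi 0)) := by
    intro lam hlam
    have hanti : AntitoneOn (fun s => Real.exp (-(2 * π * lam * Z s))) (Set.Ioi (0:ℝ)) := by
      intro a ha b hb hab
      apply Real.exp_le_exp.2
      have hZab := hZmono a b ha hab
      have := mul_le_mul_of_nonneg_left hZab (by positivity : (0:ℝ) ≤ 2 * π * lam)
      linarith
    exact (aemeasurable_restrict_of_antitoneOn measurableSet_Ioi hanti).aestronglyMeasurable
  -- integrability
  set b' : ℝ := 2 * π * lam₁ * K with hb'def
  have hb' : 0 < b' := by positivity
  have hint : ∀ lam : ℝ, lam₁ ≤ lam →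
      MeasureTheory.IntegrableOn (fun s => Real.exp (-(2 * π * lam * Z s))) (Set.Ioi 0) := by
    intro lam hlam
    have hlam0 : 0 < lam := lt_of_lt_of_le h₁ hlam
    refine MeasureTheory.Integrable.mono' (integrable_exp_neg_mul_rpow' hb' hp)
      (hmeas lam hlam0) ?_
    filter_upwards [MeasureTheory.ae_restrict_mem measurableSet_Ioi] with s hs
    rw [Real.norm_eq_abs, abs_of_nonneg (Real.exp_nonneg _)]
    apply Real.exp_le_exp.2
    have h1 : K * s ^ p ≤ Z s := hZlow s hs
    have h2 : 0 < s ^ p := Real.rpow_pos_of_pos hs p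
    have h3 : b' * s ^ p = 2 * π * lam₁ * (K * s ^ p) := by rw [hb'def]; ring
    have h4 : 2 * π * lam₁ * (K * s ^ p) ≤ 2 * π * lam₁ * Z s := by nlinarith
    have h5 : 2 * π * lam₁ * Z s ≤ 2 * π * lam * Z s := by
      have hZs := hZpos s hs
      have := mul_le_mul_of_nonneg_right
        (mul_le_mul_of_nonneg_left hlam (by positivity : (0:ℝ) ≤ 2 * π)) hZs.le
      linarith
    linarith [h3 ▸ h4]
  have hi₁ := hint lam₁ le_rfl
  have hi₂ := hint lam₂ h₁₂.le
  -- strict inequality of integrals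
  have hdpos : ∀ s ∈ Set.Ioi (0:ℝ),
      0 < Real.exp (-(2 * π * lam₁ * Z s)) - Real.exp (-(2 * π * lam₂ * Z s)) := by
    intro s hs
    have hZs := hZpos s hs
    have hll : 2 * π * lam₁ * Z s < 2 * π * lam₂ * Z s :=
      mul_lt_mul_of_pos_right
        (mul_lt_mul_of_pos_left h₁₂ (by positivity : (0:ℝ) < 2 * π)) hZs
    have : Real.exp (-(2 * π * lam₂ * Z s)) < Real.exp (-(2 * π * lam₁ * Z s)) :=
      Real.exp_lt_exp.2 (by linarith)
    linarith
  have hdint := hi₁.sub hi₂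
  have h0 : 0 < ∫ s in Set.Ioi (0:ℝ),
      (Real.exp (-(2 * π * lam₁ * Z s)) - Real.exp (-(2 * π * lam₂ * Z s))) := by
    have hnn : 0 ≤ᵐ[volume.restrict (Set.Ioi (0:ℝ))]
        fun s => Real.exp (-(2 * π * lam₁ * Z s)) - Real.exp (-(2 * π * lam₂ * Z s)) := by
      filter_upwards [MeasureTheory.ae_restrict_mem measurableSet_Ioi] with s hs
      exact (hdpos s hs).le
    rw [MeasureTheory.setIntegral_pos_iff_support_of_nonneg_ae hnn hdint]
    have hsub : Set.Ioi (0:ℝ) ⊆ Function.support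
        (fun s => Real.exp (-(2 * π * lam₁ * Z s)) - Real.exp (-(2 * π * lam₂ * Z s))) :=
      fun s hs => ne_of_gt (hdpos s hs)
    rw [Set.inter_eq_self_of_subset_right hsub, Real.volume_Ioi]
    exact ENNReal.zero_lt_top
  rw [MeasureTheory.integral_sub hi₁ hi₂] at h0
  rw [hLB lam₁ h₁, hLB lam₂ h₂]
  have hρ4 : (0:ℝ) < 4 / ρ := by positivity
  apply mul_lt_mul_of_pos_left _ hρ4
  linarith
end

section
/- Let (Ω, F, P) be a probability space, let γ > 2 and λ > 0 be real numbers, and let (C_m)_{m≥1} be an independent family of random variables such that for each m ≥ 1 the law of C_m is the Poisson distribution with mean λ·π·(2m+1). Then the series ∑_{m=1}^∞ m^{−γ}·C_m converges to a finite limit P-almost surely. -/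
open MeasureTheory Real ProbabilityTheory
open scoped ENNReal

lemma poisson_mean_hasSum {μ : ℝ} (hμ : 0 ≤ μ) :
    HasSum (fun n : ℕ => (n : ℝ) * (Real.exp (-μ) * μ ^ n / n.factorial)) μ := by
  have h1 : HasSum (fun n : ℕ => Real.exp (-μ) * μ ^ n / n.factorial) 1 := by
    have := poissonPMFRealSum μ.toNNReal
    simpa [poissonPMFReal, Real.coe_toNNReal μ hμ] using this
  have h2 : HasSum (fun n : ℕ =>
      ((n : ℝ) + 1) * (Real.exp (-μ) * μ ^ (n + 1) / (n + 1).factorial)) μ := by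
    have := h1.mul_left μ
    rw [mul_one] at this
    refine this.congr_fun fun n => ?_
    have hfac : ((n + 1).factorial : ℝ) = (n + 1) * n.factorial := by
      rw [Nat.factorial_succ]; push_cast; ring
    have hf0 : (n.factorial : ℝ) ≠ 0 := by positivity
    have hf1 : ((n : ℝ) + 1) ≠ 0 := by positivity
    rw [hfac]
    field_simp
    ring
  have := (hasSum_nat_add_iff (f := fun n : ℕ =>
      (n : ℝ) * (Real.exp (-μ) * μ ^ n / n.factorial)) 1).mp (by
    refine h2.congr_fun fun n => ?_
    push_cast
    ring_nf)
  simpa using this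

lemma lintegral_nat_of_law {Ω : Type*} [MeasurableSpace Ω] (P : Measure Ω)
    {X : Ω → ℕ} (hX : Measurable X) {μ : ℝ} (hμ : 0 ≤ μ)
    (hlaw : ∀ k, P {ω | X ω = k}
      = ENNReal.ofReal (Real.exp (-μ) * μ ^ k / (Nat.factorial k))) :
    ∫⁻ ω, (X ω : ℝ≥0∞) ∂P = ENNReal.ofReal μ := by
  have hmap : ∫⁻ ω, (X ω : ℝ≥0∞) ∂P = ∫⁻ n, (n : ℝ≥0∞) ∂(P.map X) := by
    rw [lintegral_map (by exact measurable_from_nat) hX]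
  rw [hmap, lintegral_countable' (fun n : ℕ => (n : ℝ≥0∞))]
  have hpt : ∀ n : ℕ, (P.map X) {n} = ENNReal.ofReal (Real.exp (-μ) * μ ^ n / n.factorial) := by
    intro n
    rw [Measure.map_apply hX (measurableSet_singleton n)]
    have : X ⁻¹' {n} = {ω | X ω = n} := rfl
    rw [this, hlaw]
  simp_rw [hpt]
  have hsum := poisson_mean_hasSum hμ
  calc ∑' n : ℕ, (n : ℝ≥0∞) * ENNReal.ofReal (Real.exp (-μ) * μ ^ n / n.factorial)
      = ∑' n : ℕ, ENNReal.ofReal ((n : ℝ) * (Real.exp (-μ) * μ ^ n / n.factorial)) := by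
        refine tsum_congr fun n => ?_
        rw [ENNReal.ofReal_mul (by positivity), ENNReal.ofReal_natCast]
    _ = ENNReal.ofReal μ := by
        rw [← ENNReal.ofReal_tsum_of_nonneg (fun n => by positivity) hsum.summable,
          hsum.tsum_eq]

/-- Let `γ > 2`, `λ > 0`, and let `(C m)_{m ∈ ℕ}` be an independent family of
`ℕ`-valued random variables where `C m` plays the role of `C_{m+1}` in the paper,
i.e. the law of `C m` is Poisson with mean `λ·π·(2·(m+1)+1)`. Then the series
`∑_{m≥1} m^{−γ}·C_m = ∑_{m ∈ ℕ} (m+1)^{−γ}·C m` converges to a finite limit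
`P`-almost surely. -/
theorem poisson_series_converges_as {Ω : Type*} [MeasurableSpace Ω]
    (P : Measure Ω) [IsProbabilityMeasure P]
    (γ lam : ℝ) (hγ : 2 < γ) (hlam : 0 < lam)
    (C : ℕ → Ω → ℕ) (hmeas : ∀ m, Measurable (C m))
    (hindep : iIndepFun C P)
    (hlaw : ∀ m k, P {ω | C m ω = k}
      = ENNReal.ofReal (Real.exp (-(lam * π * (2 * (m + 1) + 1)))
          * (lam * π * (2 * (m + 1) + 1)) ^ k / (Nat.factorial k))) :
    ∀ᵐ ω ∂P, Summable (fun m : ℕ => ((m : ℝ) + 1) ^ (-γ) * (C m ω : ℝ)) := by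
  set μ : ℕ → ℝ := fun m => lam * π * (2 * (m + 1) + 1) with hμdef
  have hμpos : ∀ m, 0 < μ m := fun m => by
    have := Real.pi_pos; positivity
  set g : ℕ → Ω → ℝ≥0∞ := fun m ω =>
    ENNReal.ofReal (((m : ℝ) + 1) ^ (-γ)) * (C m ω : ℝ≥0∞) with hgdef
  have hCm : ∀ m, Measurable fun ω => ((C m ω : ℕ) : ℝ≥0∞) := fun m =>
    measurable_from_nat.comp (hmeas m)
  have hgmeas : ∀ m, Measurable (g m) := fun m => (hCm m).const_mul _
  have hbpos : ∀ m : ℕ, (0:ℝ) < (m : ℝ) + 1 := fun m => by positivity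
  have hint : ∀ m, ∫⁻ ω, g m ω ∂P
      = ENNReal.ofReal (((m : ℝ) + 1) ^ (-γ) * μ m) := by
    intro m
    rw [hgdef]
    simp only
    rw [lintegral_const_mul _ (hCm m),
      lintegral_nat_of_law P (hmeas m) (hμpos m).le (hlaw m),
      ← ENNReal.ofReal_mul (by positivity)]
  have hsum1 : Summable (fun m : ℕ => ((m : ℝ) + 1) ^ (1 - γ)) := by
    have h0 : Summable (fun n : ℕ => (n : ℝ) ^ (1 - γ)) :=
      Real.summable_nat_rpow.mpr (by linarith)
    refine ((summable_nat_add_iff 1).mpr h0).congr fun n => ?_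
    push_cast
    ring_nf
  have htnn : ∀ m : ℕ, 0 ≤ ((m : ℝ) + 1) ^ (-γ) * μ m :=
    fun m => mul_nonneg (by positivity) (hμpos m).le
  have hsumt : Summable (fun m : ℕ => ((m : ℝ) + 1) ^ (-γ) * μ m) := by
    refine Summable.of_nonneg_of_le htnn ?_ (hsum1.mul_left (3 * (lam * π)))
    intro m
    have key : ((m : ℝ) + 1) ^ (-γ) * ((m : ℝ) + 1) = ((m : ℝ) + 1) ^ (1 - γ) := by
      rw [← Real.rpow_add_one (hbpos m).ne' (-γ)]
      ring_nf
    have hμle : μ m ≤ lam * π * (3 * ((m : ℝ) + 1)) := by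
      have h1 : 2 * ((m : ℝ) + 1) + 1 ≤ 3 * ((m : ℝ) + 1) := by
        have : (0:ℝ) ≤ (m : ℝ) := Nat.cast_nonneg m
        linarith
      have := Real.pi_pos
      calc μ m = lam * π * (2 * ((m : ℝ) + 1) + 1) := rfl
        _ ≤ lam * π * (3 * ((m : ℝ) + 1)) :=
            mul_le_mul_of_nonneg_left h1 (by positivity)
    calc ((m : ℝ) + 1) ^ (-γ) * μ m
        ≤ ((m : ℝ) + 1) ^ (-γ) * (lam * π * (3 * ((m : ℝ) + 1))) :=
          mul_le_mul_of_nonneg_left hμle (by positivity)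
      _ = 3 * (lam * π) * (((m : ℝ) + 1) ^ (-γ) * ((m : ℝ) + 1)) := by ring
      _ = 3 * (lam * π) * ((m : ℝ) + 1) ^ (1 - γ) := by rw [key]
  have hlint : ∫⁻ ω, ∑' m, g m ω ∂P < ⊤ := by
    rw [lintegral_tsum (fun m => (hgmeas m).aemeasurable)]
    simp_rw [hint]
    rw [← ENNReal.ofReal_tsum_of_nonneg htnn hsumt]
    exact ENNReal.ofReal_lt_top
  have hae := ae_lt_top (Measurable.ennreal_tsum hgmeas) hlint.ne
  filter_upwards [hae] with ω hω
  have hsummable := ENNReal.summable_toReal hω.ne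
  refine hsummable.congr fun m => ?_
  rw [hgdef]
  simp only
  rw [← ENNReal.ofReal_natCast, ← ENNReal.ofReal_mul (by positivity),
    ENNReal.toReal_ofReal (by positivity)]
end

section
/- Let ι be a finite linearly ordered index set, and let (g_i)_{i∈ι} and (φ_i)_{i∈ι} be families of real numbers. Let M be the 2×2 real matrix M = ∑_{i∈ι} g_i · [[cos²(φ_i), sin(φ_i)·cos(φ_i)], [sin(φ_i)·cos(φ_i), sin²(φ_i)]]. Then det(M) = ∑_{i<j} g_i·g_j·sin²(φ_i − φ_j), where the sum on the right runs over all pairs i < j in ι. -/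
open Real Finset

lemma pair_sum_aux {ι : Type*} [Fintype ι] [LinearOrder ι] (f : ι → ι → ℝ)
    (hdiag : ∀ i, f i i = 0) :
    ∑ i : ι, ∑ j : ι, f i j
      = ∑ i : ι, ∑ j ∈ Finset.univ.filter (fun j => i < j), (f i j + f j i) := by
  have key : ∑ i : ι, ∑ j : ι, f i j
      = ∑ i : ι, ∑ j : ι, ((if i < j then f i j else 0) + (if j < i then f i j else 0)) := by
    refine Finset.sum_congr rfl fun i _ => Finset.sum_congr rfl fun j _ => ?_
    rcases lt_trichotomy i j with h | h | h
    · simp [h, not_lt_of_gt h]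
    · simp [h, hdiag]
    · simp [h, not_lt_of_gt h]
  rw [key]
  simp only [Finset.sum_add_distrib]
  congr 1
  · simp [Finset.sum_filter]
  · rw [Finset.sum_comm]
    simp [Finset.sum_filter]

/-- For a finite linearly ordered index set `ι` and families `(g_i)`, `(φ_i)` of reals,
the determinant of `M = ∑ i, g i · [[cos²φᵢ, sin φᵢ cos φᵢ], [sin φᵢ cos φᵢ, sin²φᵢ]]`
equals `∑_{i<j} g_i·g_j·sin²(φᵢ − φⱼ)`. -/
theorem det_fisher_sum (ι : Type*) [Fintype ι] [LinearOrder ι] (g φ : ι → ℝ) :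
    (∑ i : ι, g i • !![Real.cos (φ i) ^ 2, Real.sin (φ i) * Real.cos (φ i);
        Real.sin (φ i) * Real.cos (φ i), Real.sin (φ i) ^ 2]).det
      = ∑ i : ι, ∑ j ∈ Finset.univ.filter (fun j => i < j),
          g i * g j * Real.sin (φ i - φ j) ^ 2 := by
  set f : ι → ι → ℝ := fun i j =>
    (g i * Real.cos (φ i) ^ 2) * (g j * Real.sin (φ j) ^ 2)
      - (g i * (Real.sin (φ i) * Real.cos (φ i))) * (g j * (Real.sin (φ j) * Real.cos (φ j)))
    with hf
  have hL : (∑ i : ι, g i • !![Real.cos (φ i) ^ 2, Real.sin (φ i) * Real.cos (φ i);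
        Real.sin (φ i) * Real.cos (φ i), Real.sin (φ i) ^ 2]).det
      = ∑ i : ι, ∑ j : ι, f i j := by
    rw [Matrix.det_fin_two]
    simp only [Matrix.sum_apply, Matrix.smul_apply, Matrix.cons_val', Matrix.cons_val_zero,
      Matrix.cons_val_one, Matrix.head_cons, Matrix.head_fin_const, Matrix.empty_val',
      Matrix.cons_val_fin_one, Matrix.of_apply, smul_eq_mul]
    rw [Finset.sum_mul_sum, Finset.sum_mul_sum, ← Finset.sum_sub_distrib]
    refine Finset.sum_congr rfl fun i _ => ?_
    rw [← Finset.sum_sub_distrib]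
  rw [hL, pair_sum_aux f (fun i => by simp [hf]; ring)]
  refine Finset.sum_congr rfl fun i _ => Finset.sum_congr rfl fun j _ => ?_
  simp only [hf, Real.sin_sub]
  ring
end
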